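/- arXiv:1406.7857 — 2 statements merged into one kernel-verified Lean document; each statement's English description precedes it below -/
import Mathlib

section
/- Let O be a conic in PG(2,q), q odd, and let ACE and BDF be two triangles inscribed in O such that no three of the six vertices A, B, C, D, E, F are collinear. Then the six sides AC, CE, EA, BD, DF, FB are all tangent to a common conic. -/
/-- Incidence pairing in `PG(2,q)`: the point `v` lies on the line `l` iff `dotp l v = 0`. -/
def dotp {F : Type*} [Field F] (l v : Fin 3 → F) : F :=
  l 0 * v 0 + l 1 * v 1 + l 2 * v 2

/-- Cross product of two vectors in `F^3`: the line through two points, and the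
intersection point of two lines. -/
def cross3 {F : Type*} [Field F] (u v : Fin 3 → F) : Fin 3 → F :=
  ![u 1 * v 2 - u 2 * v 1, u 2 * v 0 - u 0 * v 2, u 0 * v 1 - u 1 * v 0]

/-- Evaluation of the quadratic form with coefficient vector
`cf = (a, b, c, d, e, f)` (for `a x² + b y² + c z² + d xy + e xz + f yz`). -/
def qeval {F : Type*} [Field F] (cf : Fin 6 → F) (v : Fin 3 → F) : F :=
  cf 0 * v 0 ^ 2 + cf 1 * v 1 ^ 2 + cf 2 * v 2 ^ 2 +
    cf 3 * (v 0 * v 1) + cf 4 * (v 0 * v 2) + cf 5 * (v 1 * v 2)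

/-- Symmetric matrix associated to the quadratic form `cf = (a, b, c, d, e, f)`;
the form is a (nondegenerate) conic iff this matrix is nonsingular. -/
def qmat {F : Type*} [Field F] (cf : Fin 6 → F) : Matrix (Fin 3) (Fin 3) F :=
  !![cf 0, cf 3 / 2, cf 4 / 2; cf 3 / 2, cf 1, cf 5 / 2; cf 4 / 2, cf 5 / 2, cf 2]

/-- Collinearity of three points of `PG(2,q)`: some nonzero line is incident with all. -/
def Col {F : Type*} [Field F] (u v w : Fin 3 → F) : Prop :=
  ∃ l : Fin 3 → F, l ≠ 0 ∧ dotp l u = 0 ∧ dotp l v = 0 ∧ dotp l w = 0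

/-- The line `l` is tangent to the conic `cf`: it meets it in exactly one projective
point. -/
def TangentLine {F : Type*} [Field F] (cf : Fin 6 → F) (l : Fin 3 → F) : Prop :=
  (∃ v : Fin 3 → F, v ≠ 0 ∧ dotp l v = 0 ∧ qeval cf v = 0) ∧
    ∀ v w : Fin 3 → F, v ≠ 0 → w ≠ 0 → dotp l v = 0 → qeval cf v = 0 →
      dotp l w = 0 → qeval cf w = 0 → ∃ c : F, w = c • v

section Helpers
variable {F : Type*} [Field F]


@[simp] lemma vec6_three {a b c d e f : F} : (![a,b,c,d,e,f] : Fin 6 → F) 3 = d := rfl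
@[simp] lemma vec6_four {a b c d e f : F} : (![a,b,c,d,e,f] : Fin 6 → F) 4 = e := rfl
@[simp] lemma vec6_five {a b c d e f : F} : (![a,b,c,d,e,f] : Fin 6 → F) 5 = f := rfl

def det3 (u v w : Fin 3 → F) : F := dotp (cross3 u v) w

def pol (s : Fin 6 → F) (u v : Fin 3 → F) : F :=
  2 * (s 0 * (u 0 * v 0) + s 1 * (u 1 * v 1) + s 2 * (u 2 * v 2)) +
    s 3 * (u 0 * v 1 + u 1 * v 0) + s 4 * (u 0 * v 2 + u 2 * v 0) + s 5 * (u 1 * v 2 + u 2 * v 1)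

def adj4 (s : Fin 6 → F) : Fin 6 → F :=
  ![4 * (s 1 * s 2) - s 5 ^ 2, 4 * (s 0 * s 2) - s 4 ^ 2, 4 * (s 0 * s 1) - s 3 ^ 2,
    2 * (s 4 * s 5 - 2 * (s 2 * s 3)), 2 * (s 3 * s 5 - 2 * (s 1 * s 4)),
    2 * (s 3 * s 4 - 2 * (s 0 * s 5))]

def nstar (a b c : F) (A C E : Fin 3 → F) : Fin 6 → F :=
  ![2 * (a * (C 0 * E 0) + b * (A 0 * E 0) + c * (A 0 * C 0)),
    2 * (a * (C 1 * E 1) + b * (A 1 * E 1) + c * (A 1 * C 1)),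
    2 * (a * (C 2 * E 2) + b * (A 2 * E 2) + c * (A 2 * C 2)),
    2 * (a * (C 0 * E 1 + C 1 * E 0) + b * (A 0 * E 1 + A 1 * E 0) + c * (A 0 * C 1 + A 1 * C 0)),
    2 * (a * (C 0 * E 2 + C 2 * E 0) + b * (A 0 * E 2 + A 2 * E 0) + c * (A 0 * C 2 + A 2 * C 0)),
    2 * (a * (C 1 * E 2 + C 2 * E 1) + b * (A 1 * E 2 + A 2 * E 1) + c * (A 1 * C 2 + A 2 * C 1))]

lemma dotp_cross_left (u v : Fin 3 → F) : dotp (cross3 u v) u = 0 := by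
  simp [dotp, cross3]; ring

lemma dotp_cross_right (u v : Fin 3 → F) : dotp (cross3 u v) v = 0 := by
  simp [dotp, cross3]; ring

lemma key_disc (s : Fin 6 → F) (X Y : Fin 3 → F) :
    pol s X Y ^ 2 - 4 * (qeval s X * qeval s Y) = - qeval (adj4 s) (cross3 X Y) := by
  simp [pol, qeval, adj4, cross3]; ring

lemma qeval_nstar (a b c : F) (A C E l : Fin 3 → F) :
    qeval (nstar a b c A C E) l =
      2 * (a * (dotp l C * dotp l E) + b * (dotp l A * dotp l E) + c * (dotp l A * dotp l C)) := by
  simp [qeval, nstar, dotp]; ring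

def Ds (s : Fin 6 → F) : F :=
  4 * (s 0 * s 1 * s 2) + s 3 * s 4 * s 5 - s 0 * s 5 ^ 2 - s 1 * s 4 ^ 2 - s 2 * s 3 ^ 2

lemma Ds_eq (h2 : (2:F) ≠ 0) (s : Fin 6 → F) : Ds s = 4 * (qmat s).det := by
  have h2' : (2:F) * 2⁻¹ = 1 := mul_inv_cancel₀ h2
  simp only [Ds, Matrix.det_fin_three, qmat, Matrix.cons_val', Matrix.cons_val_zero,
    Matrix.cons_val_one, Matrix.head_cons, Matrix.empty_val', Matrix.cons_val_fin_one,
    Matrix.head_fin_const, Matrix.cons_val_two, Matrix.tail_cons, Matrix.of_apply]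
  linear_combination ((-(s 3 * s 4 * s 5)) * (1 + 2 * (2:F)⁻¹ + 4 * (2:F)⁻¹ ^ 2) +
    (s 2 * s 3 ^ 2 + s 1 * s 4 ^ 2 + s 0 * s 5 ^ 2) * (1 + 2 * (2:F)⁻¹)) * h2' 

lemma Ds_adj4 (s : Fin 6 → F) : Ds (adj4 s) = 16 * Ds s ^ 2 := by
  simp [Ds, adj4]; ring

lemma Ds_nstar (a b c : F) (A C E : Fin 3 → F) :
    Ds (nstar a b c A C E) = 8 * (a * b * c) * det3 A C E ^ 2 := by
  simp only [Ds, nstar, det3, dotp, cross3, Matrix.cons_val_zero, Matrix.cons_val_one,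
    Matrix.head_cons, Matrix.cons_val_two, Matrix.tail_cons, vec6_three, vec6_four, vec6_five]
  ring

lemma Ds_frame (s : Fin 6 → F) (A C E : Fin 3 → F) :
    Ds s * det3 A C E ^ 2 =
      4 * (qeval s A * qeval s C * qeval s E) + pol s C E * pol s A E * pol s A C
        - qeval s A * pol s C E ^ 2 - qeval s C * pol s A E ^ 2 - qeval s E * pol s A C ^ 2 := by
  simp only [Ds, det3, dotp, cross3, qeval, pol, Matrix.cons_val_zero, Matrix.cons_val_one,
    Matrix.head_cons, Matrix.cons_val_two, Matrix.tail_cons]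
  ring

lemma adj4_adj4 (s : Fin 6 → F) :
    adj4 (adj4 s) =
      (16 * (4 * (s 0 * s 1 * s 2) + s 3 * s 4 * s 5 - s 0 * s 5 ^ 2 - s 1 * s 4 ^ 2 - s 2 * s 3 ^ 2)) • s := by
  funext i
  fin_cases i <;> simp [adj4, Pi.smul_apply, smul_eq_mul] <;> ring

/-- Rational-parametrization form of the tangency equations: the heart of the theorem. -/
lemma frame_tang (f g h u v w : F) :
    (f ^ 2 * g) *
        (cross3 ![u * (f + h * u), -(g * u), f + h * u] ![v * (f + h * v), -(g * v), f + h * v] 1 *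
          cross3 ![u * (f + h * u), -(g * u), f + h * u] ![v * (f + h * v), -(g * v), f + h * v] 2)
      - ((f + h * u) * ((f + h * v) * (f + h * w))) *
        (cross3 ![u * (f + h * u), -(g * u), f + h * u] ![v * (f + h * v), -(g * v), f + h * v] 0 *
          cross3 ![u * (f + h * u), -(g * u), f + h * u] ![v * (f + h * v), -(g * v), f + h * v] 2)
      + (g * h ^ 2 * (u * (v * w))) *
        (cross3 ![u * (f + h * u), -(g * u), f + h * u] ![v * (f + h * v), -(g * v), f + h * v] 0 *
          cross3 ![u * (f + h * u), -(g * u), f + h * u] ![v * (f + h * v), -(g * v), f + h * v] 1)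
      = 0 := by
  simp [cross3]
  ring

lemma qeval_cramer (s : Fin 6 → F) (A C E B : Fin 3 → F) :
    qeval s (det3 B C E • A + det3 A B E • C + det3 A C B • E) =
      det3 A C E ^ 2 * qeval s B := by
  simp only [qeval, det3, dotp, cross3, Pi.add_apply, Pi.smul_apply, smul_eq_mul,
    Matrix.cons_val_zero, Matrix.cons_val_one, Matrix.head_cons, Matrix.cons_val_two,
    Matrix.tail_cons]
  ring

lemma dual_coord0 (A C E B D : Fin 3 → F) :
    det3 A C E * dotp (cross3 B D) A =
      cross3 ![det3 B C E, det3 A B E, det3 A C B] ![det3 D C E, det3 A D E, det3 A C D] 0 := by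
  simp only [det3, dotp, cross3, Matrix.cons_val_zero, Matrix.cons_val_one, Matrix.head_cons,
    Matrix.cons_val_two, Matrix.tail_cons]
  ring

lemma dual_coord1 (A C E B D : Fin 3 → F) :
    det3 A C E * dotp (cross3 B D) C =
      cross3 ![det3 B C E, det3 A B E, det3 A C B] ![det3 D C E, det3 A D E, det3 A C D] 1 := by
  simp only [det3, dotp, cross3, Matrix.cons_val_zero, Matrix.cons_val_one, Matrix.head_cons,
    Matrix.cons_val_two, Matrix.tail_cons]
  ring

lemma dual_coord2 (A C E B D : Fin 3 → F) :
    det3 A C E * dotp (cross3 B D) E =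
      cross3 ![det3 B C E, det3 A B E, det3 A C B] ![det3 D C E, det3 A D E, det3 A C D] 2 := by
  simp only [det3, dotp, cross3, Matrix.cons_val_zero, Matrix.cons_val_one, Matrix.head_cons,
    Matrix.cons_val_two, Matrix.tail_cons]
  ring

lemma cross3_smul_smul (a b : F) (u v : Fin 3 → F) :
    cross3 (a • u) (b • v) = (a * b) • cross3 u v := by
  funext i
  fin_cases i <;> simp [cross3, Pi.smul_apply, smul_eq_mul] <;> ring

lemma qeval_comb2 (s : Fin 6 → F) (a b : F) (X Y : Fin 3 → F) :
    qeval s (a • X + b • Y) =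
      a ^ 2 * qeval s X + a * b * pol s X Y + b ^ 2 * qeval s Y := by
  simp [qeval, pol, Pi.add_apply, Pi.smul_apply, smul_eq_mul]
  ring

lemma qeval_comb3 (s : Fin 6 → F) (a b c : F) (X Y Z : Fin 3 → F) :
    qeval s (a • X + b • Y + c • Z) =
      a ^ 2 * qeval s X + b ^ 2 * qeval s Y + c ^ 2 * qeval s Z +
        a * b * pol s X Y + a * c * pol s X Z + b * c * pol s Y Z := by
  simp [qeval, pol, Pi.add_apply, Pi.smul_apply, smul_eq_mul]
  ring

lemma qeval_smul_vec (s : Fin 6 → F) (a : F) (X : Fin 3 → F) :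
    qeval s (a • X) = a ^ 2 * qeval s X := by
  simp [qeval, Pi.smul_apply, smul_eq_mul]; ring

lemma qeval_smul_cf (a : F) (s : Fin 6 → F) (X : Fin 3 → F) :
    qeval (a • s) X = a * qeval s X := by
  simp [qeval, Pi.smul_apply, smul_eq_mul]; ring

lemma dotp_smul_right (l : Fin 3 → F) (a : F) (v : Fin 3 → F) :
    dotp l (a • v) = a * dotp l v := by
  simp [dotp, Pi.smul_apply, smul_eq_mul]; ring

lemma dotp_add_right (l u v : Fin 3 → F) :
    dotp l (u + v) = dotp l u + dotp l v := by
  simp [dotp, Pi.add_apply]; ring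

lemma eq_smul_of_cross_eq_zero {u v : Fin 3 → F} (hu : u ≠ 0) (h : cross3 u v = 0) :
    ∃ a : F, v = a • u := by
  have h0 := congrFun h 0
  have h1 := congrFun h 1
  have h2 := congrFun h 2
  simp only [cross3, Matrix.cons_val_zero, Matrix.cons_val_one, Matrix.head_cons,
    Matrix.cons_val_two, Matrix.tail_cons, Pi.zero_apply, sub_eq_zero] at h0 h1 h2
  obtain ⟨i, hi⟩ := Function.ne_iff.mp hu
  fin_cases i
  · have hi' : u 0 ≠ 0 := hi
    refine ⟨v 0 / u 0, funext fun j => ?_⟩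
    fin_cases j
    · show v 0 = v 0 / u 0 * u 0
      field_simp
    · show v 1 = v 0 / u 0 * u 1
      field_simp
      linear_combination h2
    · show v 2 = v 0 / u 0 * u 2
      field_simp
      linear_combination -h1
  · have hi' : u 1 ≠ 0 := hi
    refine ⟨v 1 / u 1, funext fun j => ?_⟩
    fin_cases j
    · show v 0 = v 1 / u 1 * u 0
      field_simp
      linear_combination -h2
    · show v 1 = v 1 / u 1 * u 1
      field_simp
    · show v 2 = v 1 / u 1 * u 2
      field_simp
      linear_combination h0
  · have hi' : u 2 ≠ 0 := hi
    refine ⟨v 2 / u 2, funext fun j => ?_⟩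
    fin_cases j
    · show v 0 = v 2 / u 2 * u 0
      field_simp
      linear_combination h1
    · show v 1 = v 2 / u 2 * u 1
      field_simp
      linear_combination -h0
    · show v 2 = v 2 / u 2 * u 2
      field_simp

lemma exists_perp (u : Fin 3 → F) : ∃ l : Fin 3 → F, l ≠ 0 ∧ dotp l u = 0 := by
  by_cases h0 : u 0 = 0
  · by_cases h1 : u 1 = 0
    · exact ⟨![1, 0, 0], fun h => one_ne_zero (congrFun h 0), by simp [dotp, h0]⟩
    · exact ⟨![u 1, -u 0, 0], fun h => h1 (by simpa using congrFun h 0), by simp [dotp]; ring⟩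
  · refine ⟨![u 1, -u 0, 0], fun h => h0 ?_, by simp [dotp]; ring⟩
    have := congrFun h 1
    simpa using this

lemma dotp_zero_right (l : Fin 3 → F) : dotp l 0 = 0 := by simp [dotp]

lemma exists_perp2 (u v : Fin 3 → F) : ∃ l : Fin 3 → F, l ≠ 0 ∧ dotp l u = 0 ∧ dotp l v = 0 := by
  by_cases h : cross3 u v = 0
  · by_cases hu : u = 0
    · obtain ⟨l, hl, hlv⟩ := exists_perp v
      exact ⟨l, hl, by rw [hu]; exact dotp_zero_right l, hlv⟩
    · obtain ⟨a, ha⟩ := eq_smul_of_cross_eq_zero hu h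
      obtain ⟨l, hl, hlu⟩ := exists_perp u
      exact ⟨l, hl, hlu, by rw [ha, dotp_smul_right, hlu, mul_zero]⟩
  · exact ⟨cross3 u v, h, dotp_cross_left u v, dotp_cross_right u v⟩

lemma Col.of_det3_eq_zero {u v w : Fin 3 → F} (h : det3 u v w = 0) : Col u v w := by
  by_cases hc : cross3 u v = 0
  · by_cases hu : u = 0
    · obtain ⟨l, hl, h1, h2⟩ := exists_perp2 v w
      exact ⟨l, hl, by rw [hu]; exact dotp_zero_right l, h1, h2⟩
    · obtain ⟨a, ha⟩ := eq_smul_of_cross_eq_zero hu hc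
      obtain ⟨l, hl, h1, h2⟩ := exists_perp2 u w
      exact ⟨l, hl, h1, by rw [ha, dotp_smul_right, h1, mul_zero], h2⟩
  · exact ⟨cross3 u v, hc, dotp_cross_left u v, dotp_cross_right u v, h⟩

lemma Col.of_cross3_eq_zero {u v : Fin 3 → F} (w : Fin 3 → F) (h : cross3 u v = 0) :
    Col u v w := by
  by_cases hu : u = 0
  · obtain ⟨l, hl, h1, h2⟩ := exists_perp2 v w
    exact ⟨l, hl, by rw [hu]; exact dotp_zero_right l, h1, h2⟩
  · obtain ⟨a, ha⟩ := eq_smul_of_cross_eq_zero hu h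
    obtain ⟨l, hl, h1, h2⟩ := exists_perp2 u w
    exact ⟨l, hl, h1, by rw [ha, dotp_smul_right, h1, mul_zero], h2⟩


lemma cross3_double (X Y w : Fin 3 → F) :
    cross3 (cross3 X Y) w = dotp w X • Y - dotp w Y • X := by
  funext i
  fin_cases i
  · show cross3 (cross3 X Y) w 0 = dotp w X * Y 0 - dotp w Y * X 0
    simp [cross3, dotp]; ring
  · show cross3 (cross3 X Y) w 1 = dotp w X * Y 1 - dotp w Y * X 1
    simp [cross3, dotp]; ring
  · show cross3 (cross3 X Y) w 2 = dotp w X * Y 2 - dotp w Y * X 2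
    simp [cross3, dotp]; ring

/-- A vector orthogonal to independent `X`, `Y` is a multiple of `X × Y`. -/
lemma eq_smul_cross_of_perp {X Y w : Fin 3 → F} (hXY : cross3 X Y ≠ 0)
    (h1 : dotp w X = 0) (h2 : dotp w Y = 0) : ∃ a : F, w = a • cross3 X Y := by
  apply eq_smul_of_cross_eq_zero hXY
  rw [cross3_double, h1, h2]
  simp

lemma cross3_zero_left (Y : Fin 3 → F) : cross3 0 Y = 0 := by
  funext i
  fin_cases i <;> · show _ = (0:F); simp [cross3]

lemma cross3_comb_right (X Y : Fin 3 → F) (a b : F) :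
    cross3 X (a • X + b • Y) = b • cross3 X Y := by
  funext i
  fin_cases i
  · show cross3 X (a • X + b • Y) 0 = b * cross3 X Y 0
    simp [cross3, Pi.add_apply, Pi.smul_apply]; ring
  · show cross3 X (a • X + b • Y) 1 = b * cross3 X Y 1
    simp [cross3, Pi.add_apply, Pi.smul_apply]; ring
  · show cross3 X (a • X + b • Y) 2 = b * cross3 X Y 2
    simp [cross3, Pi.add_apply, Pi.smul_apply]; ring

/-- Every point on the line `X × Y` is a linear combination of `X` and `Y`. -/
lemma mem_span_of_online {X Y v : Fin 3 → F} (hXY : cross3 X Y ≠ 0)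
    (hv : dotp (cross3 X Y) v = 0) : ∃ s t : F, v = s • X + t • Y := by
  have hv' : (X 1 * Y 2 - X 2 * Y 1) * v 0 + (X 2 * Y 0 - X 0 * Y 2) * v 1 +
      (X 0 * Y 1 - X 1 * Y 0) * v 2 = 0 := by
    simpa [dotp, cross3] using hv
  obtain ⟨i, hi⟩ := Function.ne_iff.mp hXY
  fin_cases i
  · have hL : X 1 * Y 2 - X 2 * Y 1 ≠ 0 := by simpa [cross3] using hi
    refine ⟨(v 1 * Y 2 - v 2 * Y 1) / (X 1 * Y 2 - X 2 * Y 1),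
            (X 1 * v 2 - X 2 * v 1) / (X 1 * Y 2 - X 2 * Y 1), funext fun j => ?_⟩
    fin_cases j
    · show v 0 = (v 1 * Y 2 - v 2 * Y 1) / (X 1 * Y 2 - X 2 * Y 1) * X 0 +
        (X 1 * v 2 - X 2 * v 1) / (X 1 * Y 2 - X 2 * Y 1) * Y 0
      rw [div_mul_eq_mul_div, div_mul_eq_mul_div, ← add_div, eq_div_iff hL]
      linear_combination hv'
    · show v 1 = (v 1 * Y 2 - v 2 * Y 1) / (X 1 * Y 2 - X 2 * Y 1) * X 1 +
        (X 1 * v 2 - X 2 * v 1) / (X 1 * Y 2 - X 2 * Y 1) * Y 1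
      rw [div_mul_eq_mul_div, div_mul_eq_mul_div, ← add_div, eq_div_iff hL]
      ring
    · show v 2 = (v 1 * Y 2 - v 2 * Y 1) / (X 1 * Y 2 - X 2 * Y 1) * X 2 +
        (X 1 * v 2 - X 2 * v 1) / (X 1 * Y 2 - X 2 * Y 1) * Y 2
      rw [div_mul_eq_mul_div, div_mul_eq_mul_div, ← add_div, eq_div_iff hL]
      ring
  · have hL : X 2 * Y 0 - X 0 * Y 2 ≠ 0 := by simpa [cross3] using hi
    refine ⟨(v 2 * Y 0 - v 0 * Y 2) / (X 2 * Y 0 - X 0 * Y 2),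
            (X 2 * v 0 - X 0 * v 2) / (X 2 * Y 0 - X 0 * Y 2), funext fun j => ?_⟩
    fin_cases j
    · show v 0 = (v 2 * Y 0 - v 0 * Y 2) / (X 2 * Y 0 - X 0 * Y 2) * X 0 +
        (X 2 * v 0 - X 0 * v 2) / (X 2 * Y 0 - X 0 * Y 2) * Y 0
      rw [div_mul_eq_mul_div, div_mul_eq_mul_div, ← add_div, eq_div_iff hL]
      ring
    · show v 1 = (v 2 * Y 0 - v 0 * Y 2) / (X 2 * Y 0 - X 0 * Y 2) * X 1 +
        (X 2 * v 0 - X 0 * v 2) / (X 2 * Y 0 - X 0 * Y 2) * Y 1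
      rw [div_mul_eq_mul_div, div_mul_eq_mul_div, ← add_div, eq_div_iff hL]
      linear_combination hv'
    · show v 2 = (v 2 * Y 0 - v 0 * Y 2) / (X 2 * Y 0 - X 0 * Y 2) * X 2 +
        (X 2 * v 0 - X 0 * v 2) / (X 2 * Y 0 - X 0 * Y 2) * Y 2
      rw [div_mul_eq_mul_div, div_mul_eq_mul_div, ← add_div, eq_div_iff hL]
      ring
  · have hL : X 0 * Y 1 - X 1 * Y 0 ≠ 0 := by simpa [cross3] using hi
    refine ⟨(v 0 * Y 1 - v 1 * Y 0) / (X 0 * Y 1 - X 1 * Y 0),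
            (X 0 * v 1 - X 1 * v 0) / (X 0 * Y 1 - X 1 * Y 0), funext fun j => ?_⟩
    fin_cases j
    · show v 0 = (v 0 * Y 1 - v 1 * Y 0) / (X 0 * Y 1 - X 1 * Y 0) * X 0 +
        (X 0 * v 1 - X 1 * v 0) / (X 0 * Y 1 - X 1 * Y 0) * Y 0
      rw [div_mul_eq_mul_div, div_mul_eq_mul_div, ← add_div, eq_div_iff hL]
      ring
    · show v 1 = (v 0 * Y 1 - v 1 * Y 0) / (X 0 * Y 1 - X 1 * Y 0) * X 1 +
        (X 0 * v 1 - X 1 * v 0) / (X 0 * Y 1 - X 1 * Y 0) * Y 1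
      rw [div_mul_eq_mul_div, div_mul_eq_mul_div, ← add_div, eq_div_iff hL]
      ring
    · show v 2 = (v 0 * Y 1 - v 1 * Y 0) / (X 0 * Y 1 - X 1 * Y 0) * X 2 +
        (X 0 * v 1 - X 1 * v 0) / (X 0 * Y 1 - X 1 * Y 0) * Y 2
      rw [div_mul_eq_mul_div, div_mul_eq_mul_div, ← add_div, eq_div_iff hL]
      linear_combination hv'

lemma cross3_self (Y : Fin 3 → F) : cross3 Y Y = 0 := by
  funext i
  fin_cases i <;> · show _ = (0:F); simp [cross3]; ring

lemma cross3_zero_right (X : Fin 3 → F) : cross3 X 0 = 0 := by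
  funext i
  fin_cases i <;> · show _ = (0:F); simp [cross3]

lemma cross3_smul_left (a : F) (u v : Fin 3 → F) : cross3 (a • u) v = a • cross3 u v := by
  have := cross3_smul_smul a 1 u v
  simpa using this

lemma pol_self (s : Fin 6 → F) (X : Fin 3 → F) : pol s X X = 2 * qeval s X := by
  simp [pol, qeval]; ring

lemma pol_comm (s : Fin 6 → F) (X Y : Fin 3 → F) : pol s Y X = pol s X Y := by
  simp [pol]; ring

lemma dotp_mulVec (h2 : (2:F) ≠ 0) (s : Fin 6 → F) (X Y : Fin 3 → F) :
    2 * dotp ((qmat s).mulVec X) Y = pol s X Y := by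
  have h2' : (2:F) * 2⁻¹ = 1 := mul_inv_cancel₀ h2
  simp only [Matrix.mulVec, dotProduct, Fin.sum_univ_three, qmat, dotp, pol,
    Matrix.cons_val', Matrix.cons_val_zero, Matrix.cons_val_one, Matrix.head_cons,
    Matrix.empty_val', Matrix.cons_val_fin_one, Matrix.head_fin_const, Matrix.cons_val_two,
    Matrix.tail_cons, Matrix.of_apply, div_eq_mul_inv]
  linear_combination (s 3 * (X 0 * Y 1 + X 1 * Y 0) + s 4 * (X 0 * Y 2 + X 2 * Y 0) +
    s 5 * (X 1 * Y 2 + X 2 * Y 1)) * h2'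

/-- Build a `TangentLine` certificate from a vanishing discriminant. -/
lemma tangent_of_disc (h2 : (2:F) ≠ 0) {s : Fin 6 → F} (hdet : (qmat s).det ≠ 0)
    {X Y : Fin 3 → F} (hXY : cross3 X Y ≠ 0)
    (hdisc : pol s X Y ^ 2 = 4 * (qeval s X * qeval s Y)) :
    TangentLine s (cross3 X Y) := by
  have hX0 : X ≠ 0 := by rintro rfl; exact hXY (cross3_zero_left Y)
  have hY0 : Y ≠ 0 := by rintro rfl; exact hXY (cross3_zero_right X)
  have notall : ¬ (qeval s X = 0 ∧ pol s X Y = 0 ∧ qeval s Y = 0) := by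
    rintro ⟨hQX, hB, hQY⟩
    have e1 : dotp ((qmat s).mulVec X) X = 0 := by
      apply mul_left_cancel₀ h2
      rw [dotp_mulVec h2, pol_self, hQX]
    have e2 : dotp ((qmat s).mulVec X) Y = 0 := by
      apply mul_left_cancel₀ h2
      rw [dotp_mulVec h2, hB, mul_zero]
    have e3 : dotp ((qmat s).mulVec Y) X = 0 := by
      apply mul_left_cancel₀ h2
      rw [dotp_mulVec h2, pol_comm, hB, mul_zero]
    have e4 : dotp ((qmat s).mulVec Y) Y = 0 := by
      apply mul_left_cancel₀ h2
      rw [dotp_mulVec h2, pol_self, hQY]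
    obtain ⟨la, hla⟩ := eq_smul_cross_of_perp hXY e1 e2
    obtain ⟨mu, hmu⟩ := eq_smul_cross_of_perp hXY e3 e4
    have hker : (qmat s).mulVec (mu • X - la • Y) = 0 := by
      rw [Matrix.mulVec_sub, Matrix.mulVec_smul, Matrix.mulVec_smul, hla, hmu,
        smul_smul, smul_smul, mul_comm, sub_self]
    by_cases hv : mu • X - la • Y = 0
    · have hXY' : mu • X = la • Y := by rwa [sub_eq_zero] at hv
      by_cases hmu0 : mu = 0
      · have hlaY : la • Y = 0 := by rw [← hXY', hmu0, zero_smul]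
        rcases smul_eq_zero.mp hlaY with h | h
        · rw [h, zero_smul] at hla
          exact hdet (Matrix.exists_mulVec_eq_zero_iff.mp ⟨X, hX0, hla⟩)
        · exact hY0 h
      · have hX : X = (mu⁻¹ * la) • Y := by
          rw [mul_smul, ← hXY', smul_smul, inv_mul_cancel₀ hmu0, one_smul]
        apply hXY
        rw [hX, cross3_smul_left, cross3_self, smul_zero]
    · exact hdet (Matrix.exists_mulVec_eq_zero_iff.mp ⟨_, hv, hker⟩)
  constructor
  · by_cases hQX : qeval s X = 0
    · exact ⟨X, hX0, dotp_cross_left X Y, hQX⟩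
    · refine ⟨(-(pol s X Y)) • X + (2 * qeval s X) • Y, ?_, ?_, ?_⟩
      · intro h0
        have h' := congrArg (cross3 X) h0
        rw [cross3_comb_right, cross3_zero_right] at h'
        rcases smul_eq_zero.mp h' with h | h
        · rcases mul_eq_zero.mp h with h | h
          · exact h2 h
          · exact hQX h
        · exact hXY h
      · rw [dotp_add_right, dotp_smul_right, dotp_smul_right, dotp_cross_left,
          dotp_cross_right]
        ring
      · rw [qeval_comb2]
        linear_combination (-(qeval s X)) * hdisc
  · intro v w hv0 hw0 hlv hqv hlw hqw
    obtain ⟨s1, t1, rfl⟩ := mem_span_of_online hXY hlv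
    obtain ⟨s2, t2, rfl⟩ := mem_span_of_online hXY hlw
    rw [qeval_comb2] at hqv hqw
    by_cases hQX : qeval s X = 0
    · have hB : pol s X Y = 0 := by
        have hB2 : pol s X Y ^ 2 = 0 := by rw [hdisc, hQX]; ring
        exact pow_eq_zero_iff two_ne_zero |>.mp hB2
      have hQY : qeval s Y ≠ 0 := fun h => notall ⟨hQX, hB, h⟩
      have ht1 : t1 = 0 := by
        have h' : t1 ^ 2 * qeval s Y = 0 := by linear_combination hqv - s1^2 * hQX - s1*t1*hB
        rcases mul_eq_zero.mp h' with h | h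
        · exact pow_eq_zero_iff two_ne_zero |>.mp h
        · exact absurd h hQY
      have ht2 : t2 = 0 := by
        have h' : t2 ^ 2 * qeval s Y = 0 := by linear_combination hqw - s2^2 * hQX - s2*t2*hB
        rcases mul_eq_zero.mp h' with h | h
        · exact pow_eq_zero_iff two_ne_zero |>.mp h
        · exact absurd h hQY
      have hs1 : s1 ≠ 0 := by
        intro h
        apply hv0
        rw [ht1, h, zero_smul, zero_smul, add_zero]
      refine ⟨s2 / s1, ?_⟩
      rw [ht1, ht2, zero_smul, add_zero, add_zero, smul_smul, div_mul_cancel₀ _ hs1]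
    · have key : ∀ a b : F, a ^ 2 * qeval s X + a * b * pol s X Y + b ^ 2 * qeval s Y = 0 →
          2 * qeval s X * a + pol s X Y * b = 0 := by
        intro a b hab
        have hsq : (2 * qeval s X * a + pol s X Y * b) ^ 2 = 0 := by
          linear_combination (4 * qeval s X) * hab + b ^ 2 * hdisc
        exact pow_eq_zero_iff two_ne_zero |>.mp hsq
      have e1 := key s1 t1 hqv
      have e2 := key s2 t2 hqw
      have h2QX : 2 * qeval s X ≠ 0 := mul_ne_zero h2 hQX
      have ht1 : t1 ≠ 0 := by
        intro h
        rw [h, mul_zero, add_zero, mul_eq_zero] at e1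
        rcases e1 with h' | h'
        · exact absurd h' h2QX
        · apply hv0; rw [h, h', zero_smul, zero_smul, add_zero]
      have hst : t2 / t1 * s1 = s2 := by
        have h4 : (2 * qeval s X) * (t1 * s2) = (2 * qeval s X) * (t2 * s1) := by
          linear_combination t1 * e2 - t2 * e1
        have h5 : t1 * s2 = t2 * s1 := mul_left_cancel₀ h2QX h4
        field_simp
        linear_combination -h5
      have htt : t2 / t1 * t1 = t2 := div_mul_cancel₀ _ ht1
      exact ⟨t2 / t1, by rw [smul_add, smul_smul, smul_smul, hst, htt]⟩

/-- The inscribed dual conic vanishes on the side `UV` of the second triangle. -/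
lemma nstar_vanish (a bb cc ff gg hh tu tv lamU lamV : F) (A C E U V : Fin 3 → F)
    (d1ne : det3 A C E ≠ 0)
    (hPU : (![det3 U C E, det3 A U E, det3 A C U] : Fin 3 → F) =
      lamU • ![tu * (ff + hh * tu), -(gg * tu), ff + hh * tu])
    (hPV : (![det3 V C E, det3 A V E, det3 A C V] : Fin 3 → F) =
      lamV • ![tv * (ff + hh * tv), -(gg * tv), ff + hh * tv])
    (hft : a * (cross3 ![tu * (ff + hh * tu), -(gg * tu), ff + hh * tu]
                  ![tv * (ff + hh * tv), -(gg * tv), ff + hh * tv] 1 *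
                cross3 ![tu * (ff + hh * tu), -(gg * tu), ff + hh * tu]
                  ![tv * (ff + hh * tv), -(gg * tv), ff + hh * tv] 2) +
          bb * (cross3 ![tu * (ff + hh * tu), -(gg * tu), ff + hh * tu]
                  ![tv * (ff + hh * tv), -(gg * tv), ff + hh * tv] 0 *
                cross3 ![tu * (ff + hh * tu), -(gg * tu), ff + hh * tu]
                  ![tv * (ff + hh * tv), -(gg * tv), ff + hh * tv] 2) +
          cc * (cross3 ![tu * (ff + hh * tu), -(gg * tu), ff + hh * tu]
                  ![tv * (ff + hh * tv), -(gg * tv), ff + hh * tv] 0 *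
                cross3 ![tu * (ff + hh * tu), -(gg * tu), ff + hh * tu]
                  ![tv * (ff + hh * tv), -(gg * tv), ff + hh * tv] 1) = 0) :
    qeval (nstar a bb cc A C E) (cross3 U V) = 0 := by
  set M1 := cross3 ![tu * (ff + hh * tu), -(gg * tu), ff + hh * tu]
      ![tv * (ff + hh * tv), -(gg * tv), ff + hh * tv] 0 with hM1
  set M2 := cross3 ![tu * (ff + hh * tu), -(gg * tu), ff + hh * tu]
      ![tv * (ff + hh * tv), -(gg * tv), ff + hh * tv] 1 with hM2
  set M3 := cross3 ![tu * (ff + hh * tu), -(gg * tu), ff + hh * tu]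
      ![tv * (ff + hh * tv), -(gg * tv), ff + hh * tv] 2 with hM3
  have h0 := dual_coord0 A C E U V
  have h1 := dual_coord1 A C E U V
  have h2 := dual_coord2 A C E U V
  rw [hPU, hPV, cross3_smul_smul] at h0 h1 h2
  simp only [Pi.smul_apply, smul_eq_mul, ← hM1, ← hM2, ← hM3] at h0 h1 h2
  apply mul_left_cancel₀ (pow_ne_zero 2 d1ne)
  rw [qeval_nstar]
  linear_combination (2 * a * (det3 A C E * dotp (cross3 U V) C)) * h2 +
    (2 * a * (lamU * lamV * M3)) * h1 +
    (2 * bb * (det3 A C E * dotp (cross3 U V) A)) * h2 +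
    (2 * bb * (lamU * lamV * M3)) * h0 +
    (2 * cc * (det3 A C E * dotp (cross3 U V) A)) * h1 +
    (2 * cc * (lamU * lamV * M2)) * h0 +
    (2 * (lamU * lamV) ^ 2) * hft

end Helpers

lemma two_ne_zero_of_odd_card {F : Type*} [Field F] [Fintype F]
    (hodd : Odd (Fintype.card F)) : (2:F) ≠ 0 := by
  intro h
  have hchar : ringChar F = 2 := by
    haveI := ringChar.charP F
    have hdvd : ringChar F ∣ 2 := (CharP.cast_eq_zero_iff F (ringChar F) 2).mp (by exact_mod_cast h)
    rcases (Nat.dvd_prime Nat.prime_two).mp hdvd with h1 | h1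
    · exact absurd h1 (CharP.ringChar_ne_one)
    · exact h1
  have heven := FiniteField.even_card_iff_char_two.mp hchar
  rw [Nat.odd_iff] at hodd
  omega

/-- Two triangles `ACE` and `BDF` inscribed in a conic in `PG(2,q)`, `q` odd, with no
three of the six vertices collinear, have their six sides tangent to a common conic. -/
theorem inscribed_triangles_sides_tangent_common_conic (F : Type*) [Field F] [Fintype F]
    (hodd : Odd (Fintype.card F)) (cf : Fin 6 → F) (hnd : (qmat cf).det ≠ 0)
    (A B C D E G : Fin 3 → F)
    (h0 : ∀ i : Fin 6, ![A, B, C, D, E, G] i ≠ 0)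
    (hon : ∀ i : Fin 6, qeval cf (![A, B, C, D, E, G] i) = 0)
    (hgen : ∀ i j k : Fin 6, i ≠ j → j ≠ k → i ≠ k →
      ¬ Col (![A, B, C, D, E, G] i) (![A, B, C, D, E, G] j) (![A, B, C, D, E, G] k)) :
    ∃ cf' : Fin 6 → F, (qmat cf').det ≠ 0 ∧
      TangentLine cf' (cross3 A C) ∧ TangentLine cf' (cross3 C E) ∧
      TangentLine cf' (cross3 E A) ∧ TangentLine cf' (cross3 B D) ∧
      TangentLine cf' (cross3 D G) ∧ TangentLine cf' (cross3 G B) := by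
  have h2 : (2:F) ≠ 0 := two_ne_zero_of_odd_card hodd
  have h4 : (4:F) ≠ 0 := by
    have e : (4:F) = 2 ^ 2 := by norm_num
    rw [e]; exact pow_ne_zero 2 h2
  have h8 : (8:F) ≠ 0 := by
    have e : (8:F) = 2 ^ 3 := by norm_num
    rw [e]; exact pow_ne_zero 3 h2
  have h16 : (16:F) ≠ 0 := by
    have e : (16:F) = 2 ^ 4 := by norm_num
    rw [e]; exact pow_ne_zero 4 h2
  have hQA : qeval cf A = 0 := hon 0
  have hQB : qeval cf B = 0 := hon 1
  have hQC : qeval cf C = 0 := hon 2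
  have hQD : qeval cf D = 0 := hon 3
  have hQE : qeval cf E = 0 := hon 4
  have hQG : qeval cf G = 0 := hon 5
  have ncol : ∀ i j k : Fin 6, i ≠ j → j ≠ k → i ≠ k →
      det3 (![A,B,C,D,E,G] i) (![A,B,C,D,E,G] j) (![A,B,C,D,E,G] k) ≠ 0 :=
    fun i j k hij hjk hik hd => hgen i j k hij hjk hik (Col.of_det3_eq_zero hd)
  have hd1 : det3 A C E ≠ 0 := ncol 0 2 4 (by decide) (by decide) (by decide)
  have hp0 : det3 B C E ≠ 0 := ncol 1 2 4 (by decide) (by decide) (by decide)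
  have hp1 : det3 A B E ≠ 0 := ncol 0 1 4 (by decide) (by decide) (by decide)
  have hp2 : det3 A C B ≠ 0 := ncol 0 2 1 (by decide) (by decide) (by decide)
  have hq0 : det3 D C E ≠ 0 := ncol 3 2 4 (by decide) (by decide) (by decide)
  have hq1 : det3 A D E ≠ 0 := ncol 0 3 4 (by decide) (by decide) (by decide)
  have hq2 : det3 A C D ≠ 0 := ncol 0 2 3 (by decide) (by decide) (by decide)
  have hr0 : det3 G C E ≠ 0 := ncol 5 2 4 (by decide) (by decide) (by decide)
  have hr1 : det3 A G E ≠ 0 := ncol 0 5 4 (by decide) (by decide) (by decide)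
  have hr2 : det3 A C G ≠ 0 := ncol 0 2 5 (by decide) (by decide) (by decide)
  have hcAC : cross3 A C ≠ 0 := fun hcr => hgen 0 2 4 (by decide) (by decide) (by decide) (Col.of_cross3_eq_zero E hcr)
  have hcCE : cross3 C E ≠ 0 := fun hcr => hgen 2 4 0 (by decide) (by decide) (by decide) (Col.of_cross3_eq_zero A hcr)
  have hcEA : cross3 E A ≠ 0 := fun hcr => hgen 4 0 2 (by decide) (by decide) (by decide) (Col.of_cross3_eq_zero C hcr)
  have hcBD : cross3 B D ≠ 0 := fun hcr => hgen 1 3 0 (by decide) (by decide) (by decide) (Col.of_cross3_eq_zero A hcr)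
  have hcDG : cross3 D G ≠ 0 := fun hcr => hgen 3 5 0 (by decide) (by decide) (by decide) (Col.of_cross3_eq_zero A hcr)
  have hcGB : cross3 G B ≠ 0 := fun hcr => hgen 5 1 0 (by decide) (by decide) (by decide) (Col.of_cross3_eq_zero A hcr)
  have hDf := Ds_frame cf A C E
  rw [hQA, hQC, hQE] at hDf
  have hfgh : pol cf C E * pol cf A E * pol cf A C ≠ 0 := by
    intro hz
    have hv : Ds cf * det3 A C E ^ 2 = pol cf C E * (pol cf A E * pol cf A C) := by linear_combination hDf
    rw [show pol cf C E * (pol cf A E * pol cf A C) = pol cf C E * pol cf A E * pol cf A C from by ring, hz] at hv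
    rcases mul_eq_zero.mp hv with h' | h'
    · rw [Ds_eq h2] at h'
      rcases mul_eq_zero.mp h' with h'' | h''
      · exact h4 h''
      · exact hnd h''
    · exact pow_ne_zero 2 hd1 h'
  have hFF : pol cf C E ≠ 0 := fun hz => hfgh (by rw [hz, zero_mul, zero_mul])
  have hGG : pol cf A E ≠ 0 := fun hz => hfgh (by rw [hz, mul_zero, zero_mul])
  have hHH : pol cf A C ≠ 0 := fun hz => hfgh (by rw [hz, mul_zero])
  have hcrB := qeval_cramer cf A C E B
  rw [qeval_comb3, hQA, hQC, hQE, hQB] at hcrB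
  have hRB : pol cf C E * (det3 A B E * det3 A C B) + pol cf A E * (det3 B C E * det3 A C B) + pol cf A C * (det3 B C E * det3 A B E) = 0 := by
    linear_combination hcrB
  have hcrD := qeval_cramer cf A C E D
  rw [qeval_comb3, hQA, hQC, hQE, hQD] at hcrD
  have hRD : pol cf C E * (det3 A D E * det3 A C D) + pol cf A E * (det3 D C E * det3 A C D) + pol cf A C * (det3 D C E * det3 A D E) = 0 := by
    linear_combination hcrD
  have hcrG := qeval_cramer cf A C E G
  rw [qeval_comb3, hQA, hQC, hQE, hQG] at hcrG
  have hRG : pol cf C E * (det3 A G E * det3 A C G) + pol cf A E * (det3 G C E * det3 A C G) + pol cf A C * (det3 G C E * det3 A G E) = 0 := by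
    linear_combination hcrG
  have hDB : pol cf C E * (det3 A C B) + pol cf A C * (det3 B C E) ≠ 0 := by
    intro hz
    have hgz : pol cf A E * (det3 B C E * det3 A C B) = 0 := by linear_combination hRB - (det3 A B E) * hz
    rcases mul_eq_zero.mp hgz with h' | h'
    · exact hGG h'
    · rcases mul_eq_zero.mp h' with h'' | h''
      · exact hp0 h''
      · exact hp2 h''
  have hDD : pol cf C E * (det3 A C D) + pol cf A C * (det3 D C E) ≠ 0 := by
    intro hz
    have hgz : pol cf A E * (det3 D C E * det3 A C D) = 0 := by linear_combination hRD - (det3 A D E) * hz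
    rcases mul_eq_zero.mp hgz with h' | h'
    · exact hGG h'
    · rcases mul_eq_zero.mp h' with h'' | h''
      · exact hq0 h''
      · exact hq2 h''
  have hDG : pol cf C E * (det3 A C G) + pol cf A C * (det3 G C E) ≠ 0 := by
    intro hz
    have hgz : pol cf A E * (det3 G C E * det3 A C G) = 0 := by linear_combination hRG - (det3 A G E) * hz
    rcases mul_eq_zero.mp hgz with h' | h'
    · exact hGG h'
    · rcases mul_eq_zero.mp h' with h'' | h''
      · exact hr0 h''
      · exact hr2 h''
  have hTB : (det3 B C E / det3 A C B) ≠ 0 := div_ne_zero hp0 hp2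
  have hEB : pol cf C E + pol cf A C * (det3 B C E / det3 A C B) ≠ 0 := by
    intro hz
    apply hDB
    field_simp at hz
    linear_combination hz
  have hTD : (det3 D C E / det3 A C D) ≠ 0 := div_ne_zero hq0 hq2
  have hED : pol cf C E + pol cf A C * (det3 D C E / det3 A C D) ≠ 0 := by
    intro hz
    apply hDD
    field_simp at hz
    linear_combination hz
  have hTG : (det3 G C E / det3 A C G) ≠ 0 := div_ne_zero hr0 hr2
  have hEG : pol cf C E + pol cf A C * (det3 G C E / det3 A C G) ≠ 0 := by
    intro hz
    apply hDG
    field_simp at hz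
    linear_combination hz
  have hPB : (![det3 B C E, det3 A B E, det3 A C B] : Fin 3 → F) =
      ((det3 A C B) ^ 2 / (pol cf C E * (det3 A C B) + pol cf A C * (det3 B C E))) • ![(det3 B C E / det3 A C B) * (pol cf C E + pol cf A C * (det3 B C E / det3 A C B)), -(pol cf A E * (det3 B C E / det3 A C B)), pol cf C E + pol cf A C * (det3 B C E / det3 A C B)] := by
    funext i
    fin_cases i
    · show det3 B C E = ((det3 A C B) ^ 2 / (pol cf C E * (det3 A C B) + pol cf A C * (det3 B C E))) * ((det3 B C E / det3 A C B) * (pol cf C E + pol cf A C * (det3 B C E / det3 A C B)))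
      rw [div_mul_eq_mul_div, eq_div_iff hDB]
      linear_combination (-(pol cf C E * (det3 A C B) + pol cf A C * ((det3 A C B) * (det3 B C E / det3 A C B) + det3 B C E))) * (div_mul_cancel₀ (det3 B C E) hp2)
    · show det3 A B E = ((det3 A C B) ^ 2 / (pol cf C E * (det3 A C B) + pol cf A C * (det3 B C E))) * (-(pol cf A E * (det3 B C E / det3 A C B)))
      rw [div_mul_eq_mul_div, eq_div_iff hDB]
      linear_combination hRB + pol cf A E * (det3 A C B) * (div_mul_cancel₀ (det3 B C E) hp2)
    · show det3 A C B = ((det3 A C B) ^ 2 / (pol cf C E * (det3 A C B) + pol cf A C * (det3 B C E))) * (pol cf C E + pol cf A C * (det3 B C E / det3 A C B))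
      rw [div_mul_eq_mul_div, eq_div_iff hDB]
      linear_combination (-(pol cf A C * (det3 A C B))) * (div_mul_cancel₀ (det3 B C E) hp2)
  have hPD : (![det3 D C E, det3 A D E, det3 A C D] : Fin 3 → F) =
      ((det3 A C D) ^ 2 / (pol cf C E * (det3 A C D) + pol cf A C * (det3 D C E))) • ![(det3 D C E / det3 A C D) * (pol cf C E + pol cf A C * (det3 D C E / det3 A C D)), -(pol cf A E * (det3 D C E / det3 A C D)), pol cf C E + pol cf A C * (det3 D C E / det3 A C D)] := by
    funext i
    fin_cases i
    · show det3 D C E = ((det3 A C D) ^ 2 / (pol cf C E * (det3 A C D) + pol cf A C * (det3 D C E))) * ((det3 D C E / det3 A C D) * (pol cf C E + pol cf A C * (det3 D C E / det3 A C D)))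
      rw [div_mul_eq_mul_div, eq_div_iff hDD]
      linear_combination (-(pol cf C E * (det3 A C D) + pol cf A C * ((det3 A C D) * (det3 D C E / det3 A C D) + det3 D C E))) * (div_mul_cancel₀ (det3 D C E) hq2)
    · show det3 A D E = ((det3 A C D) ^ 2 / (pol cf C E * (det3 A C D) + pol cf A C * (det3 D C E))) * (-(pol cf A E * (det3 D C E / det3 A C D)))
      rw [div_mul_eq_mul_div, eq_div_iff hDD]
      linear_combination hRD + pol cf A E * (det3 A C D) * (div_mul_cancel₀ (det3 D C E) hq2)
    · show det3 A C D = ((det3 A C D) ^ 2 / (pol cf C E * (det3 A C D) + pol cf A C * (det3 D C E))) * (pol cf C E + pol cf A C * (det3 D C E / det3 A C D))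
      rw [div_mul_eq_mul_div, eq_div_iff hDD]
      linear_combination (-(pol cf A C * (det3 A C D))) * (div_mul_cancel₀ (det3 D C E) hq2)
  have hPG : (![det3 G C E, det3 A G E, det3 A C G] : Fin 3 → F) =
      ((det3 A C G) ^ 2 / (pol cf C E * (det3 A C G) + pol cf A C * (det3 G C E))) • ![(det3 G C E / det3 A C G) * (pol cf C E + pol cf A C * (det3 G C E / det3 A C G)), -(pol cf A E * (det3 G C E / det3 A C G)), pol cf C E + pol cf A C * (det3 G C E / det3 A C G)] := by
    funext i
    fin_cases i
    · show det3 G C E = ((det3 A C G) ^ 2 / (pol cf C E * (det3 A C G) + pol cf A C * (det3 G C E))) * ((det3 G C E / det3 A C G) * (pol cf C E + pol cf A C * (det3 G C E / det3 A C G)))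
      rw [div_mul_eq_mul_div, eq_div_iff hDG]
      linear_combination (-(pol cf C E * (det3 A C G) + pol cf A C * ((det3 A C G) * (det3 G C E / det3 A C G) + det3 G C E))) * (div_mul_cancel₀ (det3 G C E) hr2)
    · show det3 A G E = ((det3 A C G) ^ 2 / (pol cf C E * (det3 A C G) + pol cf A C * (det3 G C E))) * (-(pol cf A E * (det3 G C E / det3 A C G)))
      rw [div_mul_eq_mul_div, eq_div_iff hDG]
      linear_combination hRG + pol cf A E * (det3 A C G) * (div_mul_cancel₀ (det3 G C E) hr2)
    · show det3 A C G = ((det3 A C G) ^ 2 / (pol cf C E * (det3 A C G) + pol cf A C * (det3 G C E))) * (pol cf C E + pol cf A C * (det3 G C E / det3 A C G))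
      rw [div_mul_eq_mul_div, eq_div_iff hDG]
      linear_combination (-(pol cf A C * (det3 A C G))) * (div_mul_cancel₀ (det3 G C E) hr2)
  have hAAne : (pol cf C E ^ 2 * pol cf A E) ≠ 0 := mul_ne_zero (pow_ne_zero 2 hFF) hGG
  have hBBne : (-((pol cf C E + pol cf A C * (det3 B C E / det3 A C B)) * ((pol cf C E + pol cf A C * (det3 D C E / det3 A C D)) * (pol cf C E + pol cf A C * (det3 G C E / det3 A C G))))) ≠ 0 := neg_ne_zero.mpr (mul_ne_zero hEB (mul_ne_zero hED hEG))
  have hCCne : (pol cf A E * pol cf A C ^ 2 * ((det3 B C E / det3 A C B) * ((det3 D C E / det3 A C D) * (det3 G C E / det3 A C G)))) ≠ 0 := mul_ne_zero (mul_ne_zero hGG (pow_ne_zero 2 hHH)) (mul_ne_zero hTB (mul_ne_zero hTD hTG))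
  have hqAC : qeval (nstar (pol cf C E ^ 2 * pol cf A E) (-((pol cf C E + pol cf A C * (det3 B C E / det3 A C B)) * ((pol cf C E + pol cf A C * (det3 D C E / det3 A C D)) * (pol cf C E + pol cf A C * (det3 G C E / det3 A C G))))) (pol cf A E * pol cf A C ^ 2 * ((det3 B C E / det3 A C B) * ((det3 D C E / det3 A C D) * (det3 G C E / det3 A C G)))) A C E) (cross3 A C) = 0 := by
    rw [qeval_nstar, dotp_cross_left, dotp_cross_right]; ring
  have hqCE : qeval (nstar (pol cf C E ^ 2 * pol cf A E) (-((pol cf C E + pol cf A C * (det3 B C E / det3 A C B)) * ((pol cf C E + pol cf A C * (det3 D C E / det3 A C D)) * (pol cf C E + pol cf A C * (det3 G C E / det3 A C G))))) (pol cf A E * pol cf A C ^ 2 * ((det3 B C E / det3 A C B) * ((det3 D C E / det3 A C D) * (det3 G C E / det3 A C G)))) A C E) (cross3 C E) = 0 := by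
    rw [qeval_nstar, dotp_cross_left, dotp_cross_right]; ring
  have hqEA : qeval (nstar (pol cf C E ^ 2 * pol cf A E) (-((pol cf C E + pol cf A C * (det3 B C E / det3 A C B)) * ((pol cf C E + pol cf A C * (det3 D C E / det3 A C D)) * (pol cf C E + pol cf A C * (det3 G C E / det3 A C G))))) (pol cf A E * pol cf A C ^ 2 * ((det3 B C E / det3 A C B) * ((det3 D C E / det3 A C D) * (det3 G C E / det3 A C G)))) A C E) (cross3 E A) = 0 := by
    rw [qeval_nstar, dotp_cross_left, dotp_cross_right]; ring
  have hftBD : (pol cf C E ^ 2 * pol cf A E) * (cross3 ![(det3 B C E / det3 A C B) * (pol cf C E + pol cf A C * (det3 B C E / det3 A C B)), -(pol cf A E * (det3 B C E / det3 A C B)), pol cf C E + pol cf A C * (det3 B C E / det3 A C B)] ![(det3 D C E / det3 A C D) * (pol cf C E + pol cf A C * (det3 D C E / det3 A C D)), -(pol cf A E * (det3 D C E / det3 A C D)), pol cf C E + pol cf A C * (det3 D C E / det3 A C D)] 1 * cross3 ![(det3 B C E / det3 A C B) * (pol cf C E + pol cf A C * (det3 B C E / det3 A C B)), -(pol cf A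 E * (det3 B C E / det3 A C B)), pol cf C E + pol cf A C * (det3 B C E / det3 A C B)] ![(det3 D C E / det3 A C D) * (pol cf C E + pol cf A C * (det3 D C E / det3 A C D)), -(pol cf A E * (det3 D C E / det3 A C D)), pol cf C E + pol cf A C * (det3 D C E / det3 A C D)] 2) +
      (-((pol cf C E + pol cf A C * (det3 B C E / det3 A C B)) * ((pol cf C E + pol cf A C * (det3 D C E / det3 A C D)) * (pol cf C E + pol cf A C * (det3 G C E / det3 A C G))))) * (cross3 ![(det3 B C E / det3 A C B) * (pol cf C E + pol cf A C * (det3 B C E / det3 A C B)), -(pol cf A E * (det3 B C E / det3 A C B)), pol cf C E + pol cf A C * (det3 B C E / det3 A C B)] ![(det3 D C E / det3 A C D) * (pol cf C E + pol cf A C * (det3 D C E / det3 A C D)), -(pol cf A E * (det3 D C E / det3 A C D)), pol cf C E + pol cf A C * (det3 D C E / det3 A C D)] 0 * cross3 ![(det3 B C E / det3 A C B) * (pol cf C E + pol cf A C * (det3 B C E / det3 A C B)), -(pol cf A E * (det3 B C E / det3 A C B)), pol cf C E + pol cf A C * (det3 B C E / det3 A C B)] ![(det3 D C E / det3 A C D)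 * (pol cf C E + pol cf A C * (det3 D C E / det3 A C D)), -(pol cf A E * (det3 D C E / det3 A C D)), pol cf C E + pol cf A C * (det3 D C E / det3 A C D)] 2) +
      (pol cf A E * pol cf A C ^ 2 * ((det3 B C E / det3 A C B) * ((det3 D C E / det3 A C D) * (det3 G C E / det3 A C G)))) * (cross3 ![(det3 B C E / det3 A C B) * (pol cf C E + pol cf A C * (det3 B C E / det3 A C B)), -(pol cf A E * (det3 B C E / det3 A C B)), pol cf C E + pol cf A C * (det3 B C E / det3 A C B)] ![(det3 D C E / det3 A C D) * (pol cf C E + pol cf A C * (det3 D C E / det3 A C D)), -(pol cf A E * (det3 D C E / det3 A C D)), pol cf C E + pol cf A C * (det3 D C E / det3 A C D)] 0 * cross3 ![(det3 B C E / det3 A C B) * (pol cf C E + pol cf A C * (det3 B C E / det3 A C B)), -(pol cf A E * (det3 B C E / det3 A C B)), pol cf C E + pol cf A C * (det3 B C E / det3 A C B)] ![(det3 D C E / det3 A C D) * (pol cf C E + pol cf A C * (det3 D C E / det3 A C D)), -(pol cf A E * (det3 D C E / det3 A C D)), pol cf C E + pol cf A C * (det3 D C E / det3 A C D)] 1) =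 0 := by
    linear_combination frame_tang (pol cf C E) (pol cf A E) (pol cf A C) (det3 B C E / det3 A C B) (det3 D C E / det3 A C D) (det3 G C E / det3 A C G)
  have hqBD : qeval (nstar (pol cf C E ^ 2 * pol cf A E) (-((pol cf C E + pol cf A C * (det3 B C E / det3 A C B)) * ((pol cf C E + pol cf A C * (det3 D C E / det3 A C D)) * (pol cf C E + pol cf A C * (det3 G C E / det3 A C G))))) (pol cf A E * pol cf A C ^ 2 * ((det3 B C E / det3 A C B) * ((det3 D C E / det3 A C D) * (det3 G C E / det3 A C G)))) A C E) (cross3 B D) = 0 :=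
    nstar_vanish (pol cf C E ^ 2 * pol cf A E) (-((pol cf C E + pol cf A C * (det3 B C E / det3 A C B)) * ((pol cf C E + pol cf A C * (det3 D C E / det3 A C D)) * (pol cf C E + pol cf A C * (det3 G C E / det3 A C G))))) (pol cf A E * pol cf A C ^ 2 * ((det3 B C E / det3 A C B) * ((det3 D C E / det3 A C D) * (det3 G C E / det3 A C G)))) (pol cf C E) (pol cf A E) (pol cf A C) (det3 B C E / det3 A C B) (det3 D C E / det3 A C D) ((det3 A C B) ^ 2 / (pol cf C E * (det3 A C B) + pol cf A C * (det3 B C E))) ((det3 A C D) ^ 2 / (pol cf C E * (det3 A C D) + pol cf A C * (det3 D C E))) A C E B D hd1 hPB hPD hftBD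
  have hftDG : (pol cf C E ^ 2 * pol cf A E) * (cross3 ![(det3 D C E / det3 A C D) * (pol cf C E + pol cf A C * (det3 D C E / det3 A C D)), -(pol cf A E * (det3 D C E / det3 A C D)), pol cf C E + pol cf A C * (det3 D C E / det3 A C D)] ![(det3 G C E / det3 A C G) * (pol cf C E + pol cf A C * (det3 G C E / det3 A C G)), -(pol cf A E * (det3 G C E / det3 A C G)), pol cf C E + pol cf A C * (det3 G C E / det3 A C G)] 1 * cross3 ![(det3 D C E / det3 A C D) * (pol cf C E + pol cf A C * (det3 D C E / det3 A C D)), -(pol cf A E * (det3 D C E / det3 A C D)), pol cf C E + pol cf A C * (det3 D C E / det3 A C D)] ![(det3 G C E / det3 A C G) * (pol cf C E + pol cf A C * (det3 G C E / det3 A C G)), -(pol cf A E * (det3 G C E / det3 A C G)), pol cf C E + pol cf A C * (det3 G C E / det3 A C G)] 2) +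
      (-((pol cf C E + pol cf A C * (det3 B C E / det3 A C B)) * ((pol cf C E + pol cf A C * (det3 D C E / det3 A C D)) * (pol cf C E + pol cf A C * (det3 G C E / det3 A C G))))) * (cross3 ![(det3 D C E / det3 A C D) * (pol cf C E + pol cf A C * (det3 D C E / det3 A C D)), -(pol cf A E * (det3 D C E / det3 A C D)), pol cf C E + pol cf A C * (det3 D C E / det3 A C D)] ![(det3 G C E / det3 A C G) * (pol cf C E + pol cf A C * (det3 G C E / det3 A C G)), -(pol cf A E * (det3 G C E / det3 A C G)), pol cf C E + pol cf A C * (det3 G C E / det3 A C G)] 0 * cross3 ![(det3 D C E / det3 A C D) * (pol cf C E + pol cf A C * (det3 D C E / det3 A C D)), -(pol cf A E * (det3 D C E / det3 A C D)), pol cf C E + pol cf A C * (det3 D C E / det3 A C D)] ![(det3 G C E / det3 A C G) * (pol cf C E + pol cf A C * (det3 G C E / det3 A C G)), -(pol cf A E * (det3 G C E / det3 A C G)), pol cf C E + pol cf A C * (det3 G C E / det3 A C G)] 2) +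
      (pol cf A E * pol cf A C ^ 2 * ((det3 B C E / det3 A C B) * ((det3 D C E / det3 A C D) * (det3 G C E / det3 A C G)))) * (cross3 ![(det3 D C E / det3 A C D) * (pol cf C E + pol cf A C * (det3 D C E / det3 A C D)), -(pol cf A E * (det3 D C E / det3 A C D)), pol cf C E + pol cf A C * (det3 D C E / det3 A C D)] ![(det3 G C E / det3 A C G) * (pol cf C E + pol cf A C * (det3 G C E / det3 A C G)), -(pol cf A E * (det3 G C E / det3 A C G)), pol cf C E + pol cf A C * (det3 G C E / det3 A C G)] 0 * cross3 ![(det3 D C E / det3 A C D) * (pol cf C E + pol cf A C * (det3 D C E / det3 A C D)), -(pol cf A E * (det3 D C E / det3 A C D)), pol cf C E + pol cf A C * (det3 D C E / det3 A C D)] ![(det3 G C E / det3 A C G) * (pol cf C E + pol cf A C * (det3 G C E / det3 A C G)), -(pol cf A E * (det3 G C E / det3 A C G)), pol cf C E + pol cf A C * (det3 G C E / det3 A C G)] 1) = 0 := by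
    linear_combination frame_tang (pol cf C E) (pol cf A E) (pol cf A C) (det3 D C E / det3 A C D) (det3 G C E / det3 A C G) (det3 B C E / det3 A C B)
  have hqDG : qeval (nstar (pol cf C E ^ 2 * pol cf A E) (-((pol cf C E + pol cf A C * (det3 B C E / det3 A C B)) * ((pol cf C E + pol cf A C * (det3 D C E / det3 A C D)) * (pol cf C E + pol cf A C * (det3 G C E / det3 A C G))))) (pol cf A E * pol cf A C ^ 2 * ((det3 B C E / det3 A C B) * ((det3 D C E / det3 A C D) * (det3 G C E / det3 A C G)))) A C E) (cross3 D G) = 0 :=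
    nstar_vanish (pol cf C E ^ 2 * pol cf A E) (-((pol cf C E + pol cf A C * (det3 B C E / det3 A C B)) * ((pol cf C E + pol cf A C * (det3 D C E / det3 A C D)) * (pol cf C E + pol cf A C * (det3 G C E / det3 A C G))))) (pol cf A E * pol cf A C ^ 2 * ((det3 B C E / det3 A C B) * ((det3 D C E / det3 A C D) * (det3 G C E / det3 A C G)))) (pol cf C E) (pol cf A E) (pol cf A C) (det3 D C E / det3 A C D) (det3 G C E / det3 A C G) ((det3 A C D) ^ 2 / (pol cf C E * (det3 A C D) + pol cf A C * (det3 D C E))) ((det3 A C G) ^ 2 / (pol cf C E * (det3 A C G) + pol cf A C * (det3 G C E))) A C E D G hd1 hPD hPG hftDG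
  have hftGB : (pol cf C E ^ 2 * pol cf A E) * (cross3 ![(det3 G C E / det3 A C G) * (pol cf C E + pol cf A C * (det3 G C E / det3 A C G)), -(pol cf A E * (det3 G C E / det3 A C G)), pol cf C E + pol cf A C * (det3 G C E / det3 A C G)] ![(det3 B C E / det3 A C B) * (pol cf C E + pol cf A C * (det3 B C E / det3 A C B)), -(pol cf A E * (det3 B C E / det3 A C B)), pol cf C E + pol cf A C * (det3 B C E / det3 A C B)] 1 * cross3 ![(det3 G C E / det3 A C G) * (pol cf C E + pol cf A C * (det3 G C E / det3 A C G)), -(pol cf A E * (det3 G C E / det3 A C G)), pol cf C E + pol cf A C * (det3 G C E / det3 A C G)] ![(det3 B C E / det3 A C B) * (pol cf C E + pol cf A C * (det3 B C E / det3 A C B)), -(pol cf A E * (det3 B C E / det3 A C B)), pol cf C E + pol cf A C * (det3 B C E / det3 A C B)] 2) +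
      (-((pol cf C E + pol cf A C * (det3 B C E / det3 A C B)) * ((pol cf C E + pol cf A C * (det3 D C E / det3 A C D)) * (pol cf C E + pol cf A C * (det3 G C E / det3 A C G))))) * (cross3 ![(det3 G C E / det3 A C G) * (pol cf C E + pol cf A C * (det3 G C E / det3 A C G)), -(pol cf A E * (det3 G C E / det3 A C G)), pol cf C E + pol cf A C * (det3 G C E / det3 A C G)] ![(det3 B C E / det3 A C B) * (pol cf C E + pol cf A C * (det3 B C E / det3 A C B)), -(pol cf A E * (det3 B C E / det3 A C B)), pol cf C E + pol cf A C * (det3 B C E / det3 A C B)] 0 * cross3 ![(det3 G C E / det3 A C G) * (pol cf C E + pol cf A C * (det3 G C E / det3 A C G)), -(pol cf A E * (det3 G C E / det3 A C G)), pol cf C E + pol cf A C * (det3 G C E / det3 A C G)] ![(det3 B C E / det3 A C B) * (pol cf C E + pol cf A C * (det3 B C E / det3 A C B)), -(pol cf A E * (det3 B C E / det3 A C B)), pol cf C E + pol cf A C * (det3 B C E / det3 A C B)] 2) +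
      (pol cf A E * pol cf A C ^ 2 * ((det3 B C E / det3 A C B) * ((det3 D C E / det3 A C D) * (det3 G C E / det3 A C G)))) * (cross3 ![(det3 G C E / det3 A C G) * (pol cf C E + pol cf A C * (det3 G C E / det3 A C G)), -(pol cf A E * (det3 G C E / det3 A C G)), pol cf C E + pol cf A C * (det3 G C E / det3 A C G)] ![(det3 B C E / det3 A C B) * (pol cf C E + pol cf A C * (det3 B C E / det3 A C B)), -(pol cf A E * (det3 B C E / det3 A C B)), pol cf C E + pol cf A C * (det3 B C E / det3 A C B)] 0 * cross3 ![(det3 G C E / det3 A C G) * (pol cf C E + pol cf A C * (det3 G C E / det3 A C G)), -(pol cf A E * (det3 G C E / det3 A C G)), pol cf C E + pol cf A C * (det3 G C E / det3 A C G)] ![(det3 B C E / det3 A C B) * (pol cf C E + pol cf A C * (det3 B C E / det3 A C B)), -(pol cf A E * (det3 B C E / det3 A C B)), pol cf C E + pol cf A C * (det3 B C E / det3 A C B)] 1) = 0 := by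
    linear_combination frame_tang (pol cf C E) (pol cf A E) (pol cf A C) (det3 G C E / det3 A C G) (det3 B C E / det3 A C B) (det3 D C E / det3 A C D)
  have hqGB : qeval (nstar (pol cf C E ^ 2 * pol cf A E) (-((pol cf C E + pol cf A C * (det3 B C E / det3 A C B)) * ((pol cf C E + pol cf A C * (det3 D C E / det3 A C D)) * (pol cf C E + pol cf A C * (det3 G C E / det3 A C G))))) (pol cf A E * pol cf A C ^ 2 * ((det3 B C E / det3 A C B) * ((det3 D C E / det3 A C D) * (det3 G C E / det3 A C G)))) A C E) (cross3 G B) = 0 :=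
    nstar_vanish (pol cf C E ^ 2 * pol cf A E) (-((pol cf C E + pol cf A C * (det3 B C E / det3 A C B)) * ((pol cf C E + pol cf A C * (det3 D C E / det3 A C D)) * (pol cf C E + pol cf A C * (det3 G C E / det3 A C G))))) (pol cf A E * pol cf A C ^ 2 * ((det3 B C E / det3 A C B) * ((det3 D C E / det3 A C D) * (det3 G C E / det3 A C G)))) (pol cf C E) (pol cf A E) (pol cf A C) (det3 G C E / det3 A C G) (det3 B C E / det3 A C B) ((det3 A C G) ^ 2 / (pol cf C E * (det3 A C G) + pol cf A C * (det3 G C E))) ((det3 A C B) ^ 2 / (pol cf C E * (det3 A C B) + pol cf A C * (det3 B C E))) A C E G B hd1 hPG hPB hftGB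
  have hDnsne : Ds (nstar (pol cf C E ^ 2 * pol cf A E) (-((pol cf C E + pol cf A C * (det3 B C E / det3 A C B)) * ((pol cf C E + pol cf A C * (det3 D C E / det3 A C D)) * (pol cf C E + pol cf A C * (det3 G C E / det3 A C G))))) (pol cf A E * pol cf A C ^ 2 * ((det3 B C E / det3 A C B) * ((det3 D C E / det3 A C D) * (det3 G C E / det3 A C G)))) A C E) ≠ 0 := by
    rw [Ds_nstar]
    exact mul_ne_zero (mul_ne_zero h8 (mul_ne_zero (mul_ne_zero hAAne hBBne) hCCne)) (pow_ne_zero 2 hd1)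
  have hdet' : (qmat (adj4 (nstar (pol cf C E ^ 2 * pol cf A E) (-((pol cf C E + pol cf A C * (det3 B C E / det3 A C B)) * ((pol cf C E + pol cf A C * (det3 D C E / det3 A C D)) * (pol cf C E + pol cf A C * (det3 G C E / det3 A C G))))) (pol cf A E * pol cf A C ^ 2 * ((det3 B C E / det3 A C B) * ((det3 D C E / det3 A C D) * (det3 G C E / det3 A C G)))) A C E))).det ≠ 0 := by
    intro hzero
    have hzz : Ds (adj4 (nstar (pol cf C E ^ 2 * pol cf A E) (-((pol cf C E + pol cf A C * (det3 B C E / det3 A C B)) * ((pol cf C E + pol cf A C * (det3 D C E / det3 A C D)) * (pol cf C E + pol cf A C * (det3 G C E / det3 A C G))))) (pol cf A E * pol cf A C ^ 2 * ((det3 B C E / det3 A C B) * ((det3 D C E / det3 A C D) * (det3 G C E / det3 A C G)))) A C E)) = 0 := by rw [Ds_eq h2, hzero, mul_zero]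
    rw [Ds_adj4] at hzz
    rcases mul_eq_zero.mp hzz with h' | h'
    · exact h16 h'
    · exact hDnsne (pow_eq_zero_iff two_ne_zero |>.mp h')
  have hdiscAC : pol (adj4 (nstar (pol cf C E ^ 2 * pol cf A E) (-((pol cf C E + pol cf A C * (det3 B C E / det3 A C B)) * ((pol cf C E + pol cf A C * (det3 D C E / det3 A C D)) * (pol cf C E + pol cf A C * (det3 G C E / det3 A C G))))) (pol cf A E * pol cf A C ^ 2 * ((det3 B C E / det3 A C B) * ((det3 D C E / det3 A C D) * (det3 G C E / det3 A C G)))) A C E)) A C ^ 2 = 4 * (qeval (adj4 (nstar (pol cf C E ^ 2 * pol cf A E) (-((pol cf C E + pol cf A C * (det3 B C E / det3 A C B)) * ((pol cf C E + pol cf A C * (det3 D C E / det3 A C D)) * (pol cf C E + pol cf A C * (det3 G C E / det3 A C G))))) (pol cf A E * pol cf A C ^ 2 * ((det3 B C E / det3 A C B) * ((det3 D C E / det3 A C D) * (det3 G C E / det3 A C G)))) A C E)) A * qeval (adj4 (nstar (pol cf C E ^ 2 * pol cf A E) (-((pol cf C E + pol cf A C * (det3 B C E / det3 A C B)) * ((pol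 cf C E + pol cf A C * (det3 D C E / det3 A C D)) * (pol cf C E + pol cf A C * (det3 G C E / det3 A C G))))) (pol cf A E * pol cf A C ^ 2 * ((det3 B C E / det3 A C B) * ((det3 D C E / det3 A C D) * (det3 G C E / det3 A C G)))) A C E)) C) := by
    have hk := key_disc (adj4 (nstar (pol cf C E ^ 2 * pol cf A E) (-((pol cf C E + pol cf A C * (det3 B C E / det3 A C B)) * ((pol cf C E + pol cf A C * (det3 D C E / det3 A C D)) * (pol cf C E + pol cf A C * (det3 G C E / det3 A C G))))) (pol cf A E * pol cf A C ^ 2 * ((det3 B C E / det3 A C B) * ((det3 D C E / det3 A C D) * (det3 G C E / det3 A C G)))) A C E)) A C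
    have hz : qeval (adj4 (adj4 (nstar (pol cf C E ^ 2 * pol cf A E) (-((pol cf C E + pol cf A C * (det3 B C E / det3 A C B)) * ((pol cf C E + pol cf A C * (det3 D C E / det3 A C D)) * (pol cf C E + pol cf A C * (det3 G C E / det3 A C G))))) (pol cf A E * pol cf A C ^ 2 * ((det3 B C E / det3 A C B) * ((det3 D C E / det3 A C D) * (det3 G C E / det3 A C G)))) A C E))) (cross3 A C) = 0 := by
      rw [adj4_adj4, qeval_smul_cf, hqAC, mul_zero]
    linear_combination hk - hz
  have hdiscCE : pol (adj4 (nstar (pol cf C E ^ 2 * pol cf A E) (-((pol cf C E + pol cf A C * (det3 B C E / det3 A C B)) * ((pol cf C E + pol cf A C * (det3 D C E / det3 A C D)) * (pol cf C E + pol cf A C * (det3 G C E / det3 A C G))))) (pol cf A E * pol cf A C ^ 2 * ((det3 B C E / det3 A C B) * ((det3 D C E / det3 A C D) * (det3 G C E / det3 A C G)))) A C E)) C E ^ 2 = 4 * (qeval (adj4 (nstar (pol cf C E ^ 2 * pol cf A E) (-((pol cf C E + pol cf A C * (det3 B C E / det3 A C B)) * ((pol cf C E + pol cf A C * (det3 D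 C E / det3 A C D)) * (pol cf C E + pol cf A C * (det3 G C E / det3 A C G))))) (pol cf A E * pol cf A C ^ 2 * ((det3 B C E / det3 A C B) * ((det3 D C E / det3 A C D) * (det3 G C E / det3 A C G)))) A C E)) C * qeval (adj4 (nstar (pol cf C E ^ 2 * pol cf A E) (-((pol cf C E + pol cf A C * (det3 B C E / det3 A C B)) * ((pol cf C E + pol cf A C * (det3 D C E / det3 A C D)) * (pol cf C E + pol cf A C * (det3 G C E / det3 A C G))))) (pol cf A E * pol cf A C ^ 2 * ((det3 B C E / det3 A C B) * ((det3 D C E / det3 A C D) * (det3 G C E / det3 A C G)))) A C E)) E) := by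
    have hk := key_disc (adj4 (nstar (pol cf C E ^ 2 * pol cf A E) (-((pol cf C E + pol cf A C * (det3 B C E / det3 A C B)) * ((pol cf C E + pol cf A C * (det3 D C E / det3 A C D)) * (pol cf C E + pol cf A C * (det3 G C E / det3 A C G))))) (pol cf A E * pol cf A C ^ 2 * ((det3 B C E / det3 A C B) * ((det3 D C E / det3 A C D) * (det3 G C E / det3 A C G)))) A C E)) C E
    have hz : qeval (adj4 (adj4 (nstar (pol cf C E ^ 2 * pol cf A E) (-((pol cf C E + pol cf A C * (det3 B C E / det3 A C B)) * ((pol cf C E + pol cf A C * (det3 D C E / det3 A C D)) * (pol cf C E + pol cf A C * (det3 G C E / det3 A C G))))) (pol cf A E * pol cf A C ^ 2 * ((det3 B C E / det3 A C B) * ((det3 D C E / det3 A C D) * (det3 G C E / det3 A C G)))) A C E))) (cross3 C E) = 0 := by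
      rw [adj4_adj4, qeval_smul_cf, hqCE, mul_zero]
    linear_combination hk - hz
  have hdiscEA : pol (adj4 (nstar (pol cf C E ^ 2 * pol cf A E) (-((pol cf C E + pol cf A C * (det3 B C E / det3 A C B)) * ((pol cf C E + pol cf A C * (det3 D C E / det3 A C D)) * (pol cf C E + pol cf A C * (det3 G C E / det3 A C G))))) (pol cf A E * pol cf A C ^ 2 * ((det3 B C E / det3 A C B) * ((det3 D C E / det3 A C D) * (det3 G C E / det3 A C G)))) A C E)) E A ^ 2 = 4 * (qeval (adj4 (nstar (pol cf C E ^ 2 * pol cf A E) (-((pol cf C E + pol cf A C * (det3 B C E / det3 A C B)) * ((pol cf C E + pol cf A C * (det3 D C E / det3 A C D)) * (pol cf C E + pol cf A C * (det3 G C E / det3 A C G))))) (pol cf A E * pol cf A C ^ 2 * ((det3 B C E / det3 A C B) * ((det3 D C E / det3 A C D) * (det3 G C E / det3 A C G)))) A C E)) E * qeval (adj4 (nstar (pol cf C E ^ 2 * pol cf A E) (-((pol cf C E + pol cf A C * (det3 B C E / det3 A C B)) * ((pol cf C E + pol cf A C * (det3 D C E / det3 A C D)) * (pol cf C E + pol cf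 A C * (det3 G C E / det3 A C G))))) (pol cf A E * pol cf A C ^ 2 * ((det3 B C E / det3 A C B) * ((det3 D C E / det3 A C D) * (det3 G C E / det3 A C G)))) A C E)) A) := by
    have hk := key_disc (adj4 (nstar (pol cf C E ^ 2 * pol cf A E) (-((pol cf C E + pol cf A C * (det3 B C E / det3 A C B)) * ((pol cf C E + pol cf A C * (det3 D C E / det3 A C D)) * (pol cf C E + pol cf A C * (det3 G C E / det3 A C G))))) (pol cf A E * pol cf A C ^ 2 * ((det3 B C E / det3 A C B) * ((det3 D C E / det3 A C D) * (det3 G C E / det3 A C G)))) A C E)) E A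
    have hz : qeval (adj4 (adj4 (nstar (pol cf C E ^ 2 * pol cf A E) (-((pol cf C E + pol cf A C * (det3 B C E / det3 A C B)) * ((pol cf C E + pol cf A C * (det3 D C E / det3 A C D)) * (pol cf C E + pol cf A C * (det3 G C E / det3 A C G))))) (pol cf A E * pol cf A C ^ 2 * ((det3 B C E / det3 A C B) * ((det3 D C E / det3 A C D) * (det3 G C E / det3 A C G)))) A C E))) (cross3 E A) = 0 := by
      rw [adj4_adj4, qeval_smul_cf, hqEA, mul_zero]
    linear_combination hk - hz
  have hdiscBD : pol (adj4 (nstar (pol cf C E ^ 2 * pol cf A E) (-((pol cf C E + pol cf A C * (det3 B C E / det3 A C B)) * ((pol cf C E + pol cf A C * (det3 D C E / det3 A C D)) * (pol cf C E + pol cf A C * (det3 G C E / det3 A C G))))) (pol cf A E * pol cf A C ^ 2 * ((det3 B C E / det3 A C B) * ((det3 D C E / det3 A C D) * (det3 G C E / det3 A C G)))) A C E)) B D ^ 2 = 4 * (qeval (adj4 (nstar (pol cf C E ^ 2 * pol cf A E) (-((pol cf C E + pol cf A C * (det3 B C E / det3 A C B)) * ((pol cf C E + pol cf A C * (det3 D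 C E / det3 A C D)) * (pol cf C E + pol cf A C * (det3 G C E / det3 A C G))))) (pol cf A E * pol cf A C ^ 2 * ((det3 B C E / det3 A C B) * ((det3 D C E / det3 A C D) * (det3 G C E / det3 A C G)))) A C E)) B * qeval (adj4 (nstar (pol cf C E ^ 2 * pol cf A E) (-((pol cf C E + pol cf A C * (det3 B C E / det3 A C B)) * ((pol cf C E + pol cf A C * (det3 D C E / det3 A C D)) * (pol cf C E + pol cf A C * (det3 G C E / det3 A C G))))) (pol cf A E * pol cf A C ^ 2 * ((det3 B C E / det3 A C B) * ((det3 D C E / det3 A C D) * (det3 G C E / det3 A C G)))) A C E)) D) := by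
    have hk := key_disc (adj4 (nstar (pol cf C E ^ 2 * pol cf A E) (-((pol cf C E + pol cf A C * (det3 B C E / det3 A C B)) * ((pol cf C E + pol cf A C * (det3 D C E / det3 A C D)) * (pol cf C E + pol cf A C * (det3 G C E / det3 A C G))))) (pol cf A E * pol cf A C ^ 2 * ((det3 B C E / det3 A C B) * ((det3 D C E / det3 A C D) * (det3 G C E / det3 A C G)))) A C E)) B D
    have hz : qeval (adj4 (adj4 (nstar (pol cf C E ^ 2 * pol cf A E) (-((pol cf C E + pol cf A C * (det3 B C E / det3 A C B)) * ((pol cf C E + pol cf A C * (det3 D C E / det3 A C D)) * (pol cf C E + pol cf A C * (det3 G C E / det3 A C G))))) (pol cf A E * pol cf A C ^ 2 * ((det3 B C E / det3 A C B) * ((det3 D C E / det3 A C D) * (det3 G C E / det3 A C G)))) A C E))) (cross3 B D) = 0 := by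
      rw [adj4_adj4, qeval_smul_cf, hqBD, mul_zero]
    linear_combination hk - hz
  have hdiscDG : pol (adj4 (nstar (pol cf C E ^ 2 * pol cf A E) (-((pol cf C E + pol cf A C * (det3 B C E / det3 A C B)) * ((pol cf C E + pol cf A C * (det3 D C E / det3 A C D)) * (pol cf C E + pol cf A C * (det3 G C E / det3 A C G))))) (pol cf A E * pol cf A C ^ 2 * ((det3 B C E / det3 A C B) * ((det3 D C E / det3 A C D) * (det3 G C E / det3 A C G)))) A C E)) D G ^ 2 = 4 * (qeval (adj4 (nstar (pol cf C E ^ 2 * pol cf A E) (-((pol cf C E + pol cf A C * (det3 B C E / det3 A C B)) * ((pol cf C E + pol cf A C * (det3 D C E / det3 A C D)) * (pol cf C E + pol cf A C * (det3 G C E / det3 A C G))))) (pol cf A E * pol cf A C ^ 2 * ((det3 B C E / det3 A C B) * ((det3 D C E / det3 A C D) * (det3 G C E / det3 A C G)))) A C E)) D * qeval (adj4 (nstar (pol cf C E ^ 2 * pol cf A E) (-((pol cf C E + pol cf A C * (det3 B C E / det3 A C B)) * ((pol cf C E + pol cf A C * (det3 D C E / det3 A C D)) * (pol cf C E + pol cf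 A C * (det3 G C E / det3 A C G))))) (pol cf A E * pol cf A C ^ 2 * ((det3 B C E / det3 A C B) * ((det3 D C E / det3 A C D) * (det3 G C E / det3 A C G)))) A C E)) G) := by
    have hk := key_disc (adj4 (nstar (pol cf C E ^ 2 * pol cf A E) (-((pol cf C E + pol cf A C * (det3 B C E / det3 A C B)) * ((pol cf C E + pol cf A C * (det3 D C E / det3 A C D)) * (pol cf C E + pol cf A C * (det3 G C E / det3 A C G))))) (pol cf A E * pol cf A C ^ 2 * ((det3 B C E / det3 A C B) * ((det3 D C E / det3 A C D) * (det3 G C E / det3 A C G)))) A C E)) D G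
    have hz : qeval (adj4 (adj4 (nstar (pol cf C E ^ 2 * pol cf A E) (-((pol cf C E + pol cf A C * (det3 B C E / det3 A C B)) * ((pol cf C E + pol cf A C * (det3 D C E / det3 A C D)) * (pol cf C E + pol cf A C * (det3 G C E / det3 A C G))))) (pol cf A E * pol cf A C ^ 2 * ((det3 B C E / det3 A C B) * ((det3 D C E / det3 A C D) * (det3 G C E / det3 A C G)))) A C E))) (cross3 D G) = 0 := by
      rw [adj4_adj4, qeval_smul_cf, hqDG, mul_zero]
    linear_combination hk - hz
  have hdiscGB : pol (adj4 (nstar (pol cf C E ^ 2 * pol cf A E) (-((pol cf C E + pol cf A C * (det3 B C E / det3 A C B)) * ((pol cf C E + pol cf A C * (det3 D C E / det3 A C D)) * (pol cf C E + pol cf A C * (det3 G C E / det3 A C G))))) (pol cf A E * pol cf A C ^ 2 * ((det3 B C E / det3 A C B) * ((det3 D C E / det3 A C D) * (det3 G C E / det3 A C G)))) A C E)) G B ^ 2 = 4 * (qeval (adj4 (nstar (pol cf C E ^ 2 * pol cf A E) (-((pol cf C E + pol cf A C * (det3 B C E / det3 A C B)) * ((pol cf C E + pol cf A C * (det3 D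 C E / det3 A C D)) * (pol cf C E + pol cf A C * (det3 G C E / det3 A C G))))) (pol cf A E * pol cf A C ^ 2 * ((det3 B C E / det3 A C B) * ((det3 D C E / det3 A C D) * (det3 G C E / det3 A C G)))) A C E)) G * qeval (adj4 (nstar (pol cf C E ^ 2 * pol cf A E) (-((pol cf C E + pol cf A C * (det3 B C E / det3 A C B)) * ((pol cf C E + pol cf A C * (det3 D C E / det3 A C D)) * (pol cf C E + pol cf A C * (det3 G C E / det3 A C G))))) (pol cf A E * pol cf A C ^ 2 * ((det3 B C E / det3 A C B) * ((det3 D C E / det3 A C D) * (det3 G C E / det3 A C G)))) A C E)) B) := by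
    have hk := key_disc (adj4 (nstar (pol cf C E ^ 2 * pol cf A E) (-((pol cf C E + pol cf A C * (det3 B C E / det3 A C B)) * ((pol cf C E + pol cf A C * (det3 D C E / det3 A C D)) * (pol cf C E + pol cf A C * (det3 G C E / det3 A C G))))) (pol cf A E * pol cf A C ^ 2 * ((det3 B C E / det3 A C B) * ((det3 D C E / det3 A C D) * (det3 G C E / det3 A C G)))) A C E)) G B
    have hz : qeval (adj4 (adj4 (nstar (pol cf C E ^ 2 * pol cf A E) (-((pol cf C E + pol cf A C * (det3 B C E / det3 A C B)) * ((pol cf C E + pol cf A C * (det3 D C E / det3 A C D)) * (pol cf C E + pol cf A C * (det3 G C E / det3 A C G))))) (pol cf A E * pol cf A C ^ 2 * ((det3 B C E / det3 A C B) * ((det3 D C E / det3 A C D) * (det3 G C E / det3 A C G)))) A C E))) (cross3 G B) = 0 := by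
      rw [adj4_adj4, qeval_smul_cf, hqGB, mul_zero]
    linear_combination hk - hz
  exact ⟨adj4 (nstar (pol cf C E ^ 2 * pol cf A E) (-((pol cf C E + pol cf A C * (det3 B C E / det3 A C B)) * ((pol cf C E + pol cf A C * (det3 D C E / det3 A C D)) * (pol cf C E + pol cf A C * (det3 G C E / det3 A C G))))) (pol cf A E * pol cf A C ^ 2 * ((det3 B C E / det3 A C B) * ((det3 D C E / det3 A C D) * (det3 G C E / det3 A C G)))) A C E), hdet', tangent_of_disc h2 hdet' hcAC hdiscAC, tangent_of_disc h2 hdet' hcCE hdiscCE,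
    tangent_of_disc h2 hdet' hcEA hdiscEA, tangent_of_disc h2 hdet' hcBD hdiscBD,
    tangent_of_disc h2 hdet' hcDG hdiscDG, tangent_of_disc h2 hdet' hcGB hdiscGB⟩
end

section
/- In PG(2,9), the four lines [1,1,1], [1,-1,1], [1,-1,-1], [1,1,-1] are simultaneously tangent to a conic O if and only if O has the form x^2 + (1/b)·y^2 - (1/(1+b))·z^2 = 0 for some b ∈ GF(9) with b ≠ 0 and b ≠ -1. -/
instance : Fact (Nat.Prime 3) := ⟨by norm_num⟩

/-- The field `GF(9)` of order 9. -/
abbrev GF9 := GaloisField 3 2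

/- ------------------- auxiliary lemmas ------------------- -/

lemma three_eq_zero : (3 : GF9) = 0 := by
  exact_mod_cast CharP.cast_eq_zero GF9 3

lemma half_eq (x : GF9) : x / 2 = -x := by
  have h2 : (2:GF9) = -1 := by linear_combination three_eq_zero
  rw [h2]
  field_simp

lemma det_qmat (cf : Fin 6 → GF9) : (qmat cf).det =
    cf 0*cf 1*cf 2 - cf 0*cf 5^2 - cf 2*cf 3^2 - cf 1*cf 4^2 - 2*(cf 3*cf 4*cf 5) := by
  simp [qmat, Matrix.det_fin_three, half_eq]
  ring_nf

lemma dotp_explicit (l1 l2 x y z : GF9) :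
    dotp ![1,l1,l2] ![x,y,z] = x + l1*y + l2*z := by
  simp [dotp]

lemma restrict (cf : Fin 6 → GF9) (l1 l2 : GF9) (v : Fin 3 → GF9)
    (h1 : l1^2 = 1) (h2 : l2^2 = 1) (hv : dotp ![1,l1,l2] v = 0) :
    qeval cf v = (cf 0 + cf 1 - cf 3 * l1) * v 1 ^ 2
      + (2 * cf 0 * l1 * l2 - cf 3 * l2 - cf 4 * l1 + cf 5) * (v 1 * v 2)
      + (cf 0 + cf 2 - cf 4 * l2) * v 2 ^ 2 := by
  simp only [dotp, Matrix.cons_val_zero, Matrix.cons_val_one, Matrix.head_cons,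
    Matrix.cons_val_two, Matrix.tail_cons, one_mul] at hv
  have h0 : v 0 = -(l1 * v 1 + l2 * v 2) := by linear_combination hv
  rw [qeval, h0]
  linear_combination (cf 0 * v 1^2) * h1 + (cf 0 * v 2^2) * h2

lemma vec3_ne_zero {v : Fin 3 → GF9} {i : Fin 3} (h : v i ≠ 0) : v ≠ 0 :=
  fun hv => h (by rw [hv]; rfl)

lemma vec3_eq_zero {v : Fin 3 → GF9} (h0 : v 0 = 0) (h1 : v 1 = 0) (h2 : v 2 = 0) :
    v = 0 := by
  funext i; fin_cases i <;> simpa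

lemma tangent_disc {cf : Fin 6 → GF9} {l1 l2 : GF9} (h1 : l1^2 = 1) (h2 : l2^2 = 1)
    (ht : TangentLine cf ![1, l1, l2]) :
    (2*cf 0*l1*l2 - cf 3*l2 - cf 4*l1 + cf 5)^2
      = 4*(cf 0 + cf 1 - cf 3*l1)*(cf 0 + cf 2 - cf 4*l2) := by
  obtain ⟨⟨v, hv0, hlv, hqv⟩, huniq⟩ := ht
  by_contra hD0
  have hD : (2*cf 0*l1*l2 - cf 3*l2 - cf 4*l1 + cf 5)^2
      - 4*(cf 0 + cf 1 - cf 3*l1)*(cf 0 + cf 2 - cf 4*l2) ≠ 0 :=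
    fun h => hD0 (by linear_combination h)
  have hvq : (cf 0 + cf 1 - cf 3*l1) * v 1^2
      + (2*cf 0*l1*l2 - cf 3*l2 - cf 4*l1 + cf 5) * (v 1 * v 2)
      + (cf 0 + cf 2 - cf 4*l2) * v 2^2 = 0 := by
    rw [← restrict cf l1 l2 v h1 h2 hlv]; exact hqv
  have hvl : v 0 = -(l1 * v 1 + l2 * v 2) := by
    simp only [dotp, Matrix.cons_val_zero, Matrix.cons_val_one, Matrix.head_cons,
      Matrix.cons_val_two, Matrix.tail_cons, one_mul] at hlv
    linear_combination hlv
  have hv12 : ¬(v 1 = 0 ∧ v 2 = 0) := by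
    rintro ⟨e1, e2⟩
    exact hv0 (vec3_eq_zero (by rw [hvl, e1, e2]; ring) e1 e2)
  by_cases hA : cf 0 + cf 1 - cf 3*l1 = 0
  · have hB : 2*cf 0*l1*l2 - cf 3*l2 - cf 4*l1 + cf 5 ≠ 0 := by
      intro h; apply hD; rw [hA, h]; ring
    have hd1 : dotp ![1,l1,l2] ![-l1, (1:GF9), 0] = 0 := by
      rw [dotp_explicit]; ring
    have hq1 : qeval cf ![-l1, (1:GF9), 0] = 0 := by
      rw [restrict cf l1 l2 _ h1 h2 hd1]
      simp only [Matrix.cons_val_one, Matrix.head_cons, Matrix.cons_val_two,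
        Matrix.tail_cons, Matrix.cons_val_zero]
      linear_combination hA
    have hd2 : dotp ![1,l1,l2]
        ![l1*(cf 0 + cf 2 - cf 4*l2) - l2*(2*cf 0*l1*l2 - cf 3*l2 - cf 4*l1 + cf 5),
          -(cf 0 + cf 2 - cf 4*l2), 2*cf 0*l1*l2 - cf 3*l2 - cf 4*l1 + cf 5] = 0 := by
      rw [dotp_explicit]; ring
    have hq2 : qeval cf
        ![l1*(cf 0 + cf 2 - cf 4*l2) - l2*(2*cf 0*l1*l2 - cf 3*l2 - cf 4*l1 + cf 5),
          -(cf 0 + cf 2 - cf 4*l2), 2*cf 0*l1*l2 - cf 3*l2 - cf 4*l1 + cf 5] = 0 := by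
      rw [restrict cf l1 l2 _ h1 h2 hd2]
      simp only [Matrix.cons_val_one, Matrix.head_cons, Matrix.cons_val_two,
        Matrix.tail_cons, Matrix.cons_val_zero]
      linear_combination (cf 0 + cf 2 - cf 4*l2)^2 * hA
    obtain ⟨c, hc⟩ := huniq _ _
      (vec3_ne_zero (i := 1) (show ((![-l1, (1:GF9), 0]) 1) ≠ 0 by norm_num))
      (vec3_ne_zero (i := 2) (by simpa using hB))
      hd1 hq1 hd2 hq2
    have := congrFun hc 2
    simp only [Matrix.cons_val_two, Matrix.tail_cons, Matrix.head_cons, Pi.smul_apply,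
      smul_eq_mul, mul_zero] at this
    exact hB this
  · have hv2 : v 2 ≠ 0 := by
      intro e2
      have e1 : v 1 ≠ 0 := fun e1 => hv12 ⟨e1, e2⟩
      apply hA
      have hz : (cf 0 + cf 1 - cf 3*l1) * v 1 ^ 2 = 0 := by
        rw [e2] at hvq; linear_combination hvq
      rcases mul_eq_zero.1 hz with h | h
      · exact h
      · exact absurd (pow_eq_zero_iff (by norm_num) |>.1 h) e1
    have hd2 : dotp ![1,l1,l2]
        ![-(l1*(-((2*cf 0*l1*l2 - cf 3*l2 - cf 4*l1 + cf 5) * v 2 + (cf 0 + cf 1 - cf 3*l1) * v 1)) + l2*((cf 0 + cf 1 - cf 3*l1) * v 2)),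
          -((2*cf 0*l1*l2 - cf 3*l2 - cf 4*l1 + cf 5) * v 2 + (cf 0 + cf 1 - cf 3*l1) * v 1),
          (cf 0 + cf 1 - cf 3*l1) * v 2] = 0 := by
      rw [dotp_explicit]; ring
    have hq2 : qeval cf
        ![-(l1*(-((2*cf 0*l1*l2 - cf 3*l2 - cf 4*l1 + cf 5) * v 2 + (cf 0 + cf 1 - cf 3*l1) * v 1)) + l2*((cf 0 + cf 1 - cf 3*l1) * v 2)),
          -((2*cf 0*l1*l2 - cf 3*l2 - cf 4*l1 + cf 5) * v 2 + (cf 0 + cf 1 - cf 3*l1) * v 1),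
          (cf 0 + cf 1 - cf 3*l1) * v 2] = 0 := by
      rw [restrict cf l1 l2 _ h1 h2 hd2]
      simp only [Matrix.cons_val_one, Matrix.head_cons, Matrix.cons_val_two,
        Matrix.tail_cons, Matrix.cons_val_zero]
      linear_combination (cf 0 + cf 1 - cf 3*l1)^2 * hvq
    obtain ⟨c, hc⟩ := huniq v _ hv0
      (vec3_ne_zero (i := 2) (by simpa using mul_ne_zero hA hv2))
      hlv hqv hd2 hq2
    have e1 := congrFun hc 1
    have e2 := congrFun hc 2
    simp only [Matrix.cons_val_one, Matrix.head_cons, Matrix.cons_val_two,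
      Matrix.tail_cons, Pi.smul_apply, smul_eq_mul, Matrix.cons_val_zero] at e1 e2
    have key : v 2 * (2*(cf 0 + cf 1 - cf 3*l1)*v 1
        + (2*cf 0*l1*l2 - cf 3*l2 - cf 4*l1 + cf 5)*v 2) = 0 := by
      linear_combination (v 1) * e2 - (v 2) * e1
    have h2Av : 2*(cf 0 + cf 1 - cf 3*l1)*v 1
        + (2*cf 0*l1*l2 - cf 3*l2 - cf 4*l1 + cf 5)*v 2 = 0 := by
      rcases mul_eq_zero.1 key with h | h
      · exact absurd h hv2
      · exact h
    apply hD
    have hzz : ((2*cf 0*l1*l2 - cf 3*l2 - cf 4*l1 + cf 5)^2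
        - 4*(cf 0 + cf 1 - cf 3*l1)*(cf 0 + cf 2 - cf 4*l2)) * v 2^2 = 0 := by
      linear_combination (2*(cf 0 + cf 1 - cf 3*l1)*v 1
        + (2*cf 0*l1*l2 - cf 3*l2 - cf 4*l1 + cf 5)*v 2) * h2Av
        - 4*(cf 0 + cf 1 - cf 3*l1)*hvq
    rcases mul_eq_zero.1 hzz with h | h
    · exact h
    · exact absurd (pow_eq_zero_iff (by norm_num) |>.1 h) hv2

lemma tangent_bwd {cf : Fin 6 → GF9} {b l1 l2 : GF9} (h1 : l1^2 = 1) (h2 : l2^2 = 1)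
    (hb0 : b ≠ 0) (hb1 : (1:GF9) + b ≠ 0)
    (hq : ∀ v : Fin 3 → GF9, qeval cf v = 0 ↔
      v 0 ^ 2 + b⁻¹ * v 1 ^ 2 - (1 + b)⁻¹ * v 2 ^ 2 = 0) :
    TangentLine cf ![1, l1, l2] := by
  have e1 : b⁻¹ * b = 1 := inv_mul_cancel₀ hb0
  have e2 : (1+b)⁻¹ * (1+b) = 1 := inv_mul_cancel₀ hb1
  constructor
  · refine ⟨![-l2, -(l1*l2*b), 1+b], vec3_ne_zero (i := 2) (by simpa using hb1), ?_, ?_⟩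
    · rw [dotp_explicit]; linear_combination (-(l2*b)) * h1
    · rw [hq]
      simp only [Matrix.cons_val_zero, Matrix.cons_val_one, Matrix.head_cons,
        Matrix.cons_val_two, Matrix.tail_cons]
      linear_combination (b*l1^2*l2^2) * e1 + (-(1+b)) * e2 + (b*l2^2) * h1 + (1+b) * h2
  · intro v w hv0 hw0 hlv hqv hlw hqw
    have key : ∀ u : Fin 3 → GF9, u ≠ 0 → dotp ![1,l1,l2] u = 0 → qeval cf u = 0 →
        (1+b) * u 1 + l1*l2*b * u 2 = 0 ∧ u 2 ≠ 0 := by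
      intro u hu0 hlu hqu
      rw [hq] at hqu
      simp only [dotp, Matrix.cons_val_zero, Matrix.cons_val_one, Matrix.head_cons,
        Matrix.cons_val_two, Matrix.tail_cons, one_mul] at hlu
      have h0 : u 0 = -(l1 * u 1 + l2 * u 2) := by linear_combination hlu
      rw [h0] at hqu
      have hsq : ((1+b) * u 1 + l1*l2*b * u 2)^2 = 0 := by
        linear_combination (b*(1+b)) * hqu
          + (b^2*l2^2*u 2^2 - (1+b)*b*u 1^2) * h1 + (-(b*u 2^2)) * h2
          + (-((1+b)*u 1^2)) * e1 + (b*u 2^2) * e2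
      have hlin : (1+b) * u 1 + l1*l2*b * u 2 = 0 := pow_eq_zero_iff (by norm_num) |>.1 hsq
      refine ⟨hlin, ?_⟩
      intro hz2
      have hz1 : u 1 = 0 := by
        have : (1+b) * u 1 = 0 := by rw [hz2] at hlin; linear_combination hlin
        rcases mul_eq_zero.1 this with h | h
        · exact absurd h hb1
        · exact h
      exact hu0 (vec3_eq_zero (by rw [h0, hz1, hz2]; ring) hz1 hz2)
    obtain ⟨kv, hv2⟩ := key v hv0 hlv hqv
    obtain ⟨kw, hw2⟩ := key w hw0 hlw hqw
    refine ⟨w 2 / v 2, ?_⟩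
    have hvl : v 0 = -(l1 * v 1 + l2 * v 2) := by
      simp only [dotp, Matrix.cons_val_zero, Matrix.cons_val_one, Matrix.head_cons,
        Matrix.cons_val_two, Matrix.tail_cons, one_mul] at hlv
      linear_combination hlv
    have hwl : w 0 = -(l1 * w 1 + l2 * w 2) := by
      simp only [dotp, Matrix.cons_val_zero, Matrix.cons_val_one, Matrix.head_cons,
        Matrix.cons_val_two, Matrix.tail_cons, one_mul] at hlw
      linear_combination hlw
    have c2 : w 2 = (w 2 / v 2) * v 2 := by field_simp
    have c1 : w 1 = (w 2 / v 2) * v 1 := by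
      have h' : (1+b) * (w 1 - (w 2 / v 2) * v 1) = 0 := by
        field_simp
        linear_combination (v 2) * kw - (w 2) * kv
      rcases mul_eq_zero.1 h' with h | h
      · exact absurd h hb1
      · linear_combination h
    have c0 : w 0 = (w 2 / v 2) * v 0 := by
      linear_combination hwl - (w 2/v 2)*hvl - l1*c1 - l2*c2
    funext i
    fin_cases i
    · exact c0
    · exact c1
    · exact c2

/-- In `PG(2,9)`, the four lines `[1,1,1]`, `[1,-1,1]`, `[1,-1,-1]`, `[1,1,-1]` are all
tangent to a conic `O` iff `O` is given by `x² + (1/b)·y² - (1/(1+b))·z² = 0` for some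
`b ≠ 0, -1`. -/
theorem four_tangents_normal_form (cf : Fin 6 → GF9) (hnd : (qmat cf).det ≠ 0) :
    (TangentLine cf ![1, 1, 1] ∧ TangentLine cf ![1, -1, 1] ∧
     TangentLine cf ![1, -1, -1] ∧ TangentLine cf ![1, 1, -1]) ↔
    ∃ b : GF9, b ≠ 0 ∧ b ≠ -1 ∧
      ∀ v : Fin 3 → GF9, qeval cf v = 0 ↔
        v 0 ^ 2 + b⁻¹ * v 1 ^ 2 - (1 + b)⁻¹ * v 2 ^ 2 = 0 := by
  have o1 : ((1:GF9))^2 = 1 := one_pow 2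
  have o2 : ((-1:GF9))^2 = 1 := neg_one_sq
  have h3 := three_eq_zero
  constructor
  · rintro ⟨t1, t2, t3, t4⟩
    have H11 := tangent_disc o1 o1 t1
    have Hm1 := tangent_disc o2 o1 t2
    have Hmm := tangent_disc o2 o2 t3
    have H1m := tangent_disc o1 o2 t4
    have hi : cf 2*cf 3 + cf 4*cf 5 = 0 := by
      linear_combination H11 - Hm1 + H1m - Hmm + (-5*(cf 2*cf 3) + 3*(cf 4*cf 5))*h3
    have hii : cf 1*cf 4 + cf 3*cf 5 = 0 := by
      linear_combination H11 + Hm1 - H1m - Hmm + (-5*(cf 1*cf 4) + 3*(cf 3*cf 5))*h3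
    have hiii : cf 0*cf 5 + cf 3*cf 4 = 0 := by
      linear_combination H11 - Hm1 - H1m + Hmm + (-5*(cf 0*cf 5) + 3*(cf 3*cf 4))*h3
    have hdet := det_qmat cf
    have hdet2 : (qmat cf).det = cf 0*cf 1*cf 2 + cf 3*cf 4*cf 5 := by
      rw [hdet]; linear_combination (-(cf 5))*hiii - (cf 3)*hi - (cf 4)*hii
    have hprod : (cf 3*cf 4*cf 5) * (cf 3*cf 4*cf 5 + cf 0*cf 1*cf 2) = 0 := by
      linear_combination ((cf 3*cf 5)*(cf 4*cf 5))*hiii - ((cf 0*cf 5)*(cf 4*cf 5))*hii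
        + ((cf 0*cf 5)*(cf 1*cf 4))*hi
    have hdef0 : cf 3*cf 4*cf 5 = 0 := by
      rcases mul_eq_zero.1 hprod with h | h
      · exact h
      · exact absurd (by rw [hdet2]; linear_combination h) hnd
    have hdef : cf 3 = 0 ∧ cf 4 = 0 ∧ cf 5 = 0 := by
      rcases mul_eq_zero.1 hdef0 with h34 | hf
      · rcases mul_eq_zero.1 h34 with hd | he
        · have hef : cf 4*cf 5 = 0 := by linear_combination hi - cf 2*hd
          rcases mul_eq_zero.1 hef with he | hf
          · have haf : cf 0*cf 5 = 0 := by linear_combination hiii - cf 4*hd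
            rcases mul_eq_zero.1 haf with ha | hf
            · exact absurd (by rw [hdet]; linear_combination (cf 1*cf 2 - cf 5^2)*ha
                + (-(cf 2*cf 3))*hd + (-(cf 1*cf 4) - 2*cf 3*cf 5)*he) hnd
            · exact ⟨hd, he, hf⟩
          · have hb1e : cf 1*cf 4 = 0 := by linear_combination hii - cf 3*hf
            rcases mul_eq_zero.1 hb1e with hb1 | he
            · exact absurd (by rw [hdet]; linear_combination (cf 0*cf 2 - cf 4^2)*hb1
                + (-(cf 2*cf 3) - 2*cf 4*cf 5)*hd + (-(cf 0*cf 5))*hf) hnd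
            · exact ⟨hd, he, hf⟩
        · have hcd : cf 2*cf 3 = 0 := by linear_combination hi - cf 5*he
          have haf : cf 0*cf 5 = 0 := by linear_combination hiii - cf 3*he
          rcases mul_eq_zero.1 hcd with hc | hd
          · exact absurd (by rw [hdet]; linear_combination (cf 0*cf 1 - cf 3^2)*hc
              + (-(cf 1*cf 4) - 2*cf 3*cf 5)*he + (-(cf 5))*haf) hnd
          · rcases mul_eq_zero.1 haf with ha | hf
            · exact absurd (by rw [hdet]; linear_combination (cf 1*cf 2 - cf 5^2)*ha
                + (-(cf 2*cf 3))*hd + (-(cf 1*cf 4) - 2*cf 3*cf 5)*he) hnd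
            · exact ⟨hd, he, hf⟩
      · have hb1e : cf 1*cf 4 = 0 := by linear_combination hii - cf 3*hf
        have hcd : cf 2*cf 3 = 0 := by linear_combination hi - cf 4*hf
        rcases mul_eq_zero.1 hb1e with hb1 | he
        · exact absurd (by rw [hdet]; linear_combination (cf 0*cf 2 - cf 4^2)*hb1
            + (-(cf 0*cf 5) - 2*cf 3*cf 4)*hf + (-(cf 3))*hcd) hnd
        · rcases mul_eq_zero.1 hcd with hc | hd
          · exact absurd (by rw [hdet]; linear_combination (cf 0*cf 1 - cf 3^2)*hc
              + (-(cf 0*cf 5) - 2*cf 3*cf 4)*hf + (-(cf 1*cf 4))*he) hnd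
          · exact ⟨hd, he, hf⟩
    obtain ⟨hd, he, hf⟩ := hdef
    have hSigma : cf 0*cf 2 + cf 0*cf 1 + cf 1*cf 2 = 0 := by
      rw [hd, he, hf] at H11
      linear_combination (-1:GF9)*H11 + (-(cf 0*cf 2 + cf 0*cf 1 + cf 1*cf 2))*h3
    have habc : cf 0*cf 1*cf 2 ≠ 0 := by
      intro h
      apply hnd
      rw [hdet]
      linear_combination h + (-(cf 2*cf 3) - 2*cf 4*cf 5)*hd + (-(cf 1*cf 4))*he
        + (-(cf 0*cf 5))*hf
    have ha : cf 0 ≠ 0 := left_ne_zero_of_mul (left_ne_zero_of_mul habc)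
    have hb1 : cf 1 ≠ 0 := right_ne_zero_of_mul (left_ne_zero_of_mul habc)
    have hc : cf 2 ≠ 0 := right_ne_zero_of_mul habc
    have hab : cf 0 + cf 1 ≠ 0 := by
      intro h
      have hsq : cf 1^2 = 0 := by linear_combination (cf 2 + cf 1)*h - hSigma
      exact hb1 (pow_eq_zero_iff (by norm_num) |>.1 hsq)
    refine ⟨cf 0 / cf 1, div_ne_zero ha hb1, ?_, ?_⟩
    · intro h
      apply hab
      rw [div_eq_iff hb1] at h
      linear_combination h
    · intro v
      have binv : (cf 0/cf 1)⁻¹ = cf 1/cf 0 := inv_div _ _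
      have h1pb : (1 + cf 0/cf 1)⁻¹ = cf 1/(cf 0 + cf 1) := by
        rw [show (1 + cf 0/cf 1) = (cf 0 + cf 1)/cf 1 by field_simp; ring, inv_div]
      rw [binv, h1pb]
      have key : qeval cf v = cf 0 * (v 0^2 + cf 1/cf 0*v 1^2
          - cf 1/(cf 0 + cf 1)*v 2^2) := by
        rw [qeval, hd, he, hf]
        field_simp
        linear_combination (v 2^2)*hSigma
      rw [key, mul_eq_zero, or_iff_right ha]
  · rintro ⟨b, hb0, hbm1, hq⟩
    have hb1' : (1:GF9) + b ≠ 0 := fun h => hbm1 (by linear_combination h)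
    exact ⟨tangent_bwd o1 o1 hb0 hb1' hq, tangent_bwd o2 o1 hb0 hb1' hq,
      tangent_bwd o2 o2 hb0 hb1' hq, tangent_bwd o1 o2 hb0 hb1' hq⟩
end
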